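/- arXiv:2307.03983 — 5 statements merged into one kernel-verified Lean document; each statement's English description precedes it below -/
import Mathlib

section
/- The HSIC-PA overall outage probability decomposes as Pout = Q̃1 + Q̃2 + QM + QM+1, where Q̃1 = P( Ps·Z > τ(G), Z < (G/α0 − 1)·(P0·G + 1)/Ps, log2(1+τ(G)) < Rs, G > α0 ); Q̃2 = P( Ps·Z > τ(G), Z > (G/α0 − 1)·(P0·G + 1)/Ps, log2(1 + Ps·Z/(P0·G + 1)) < Rs, G > α0 ); QM = P( Ps·Z < τ(G), log2(1 + Ps·Z) < Rs, G > α0 ); and QM+1 = P( max{ log2(1 + Ps·Z/(P0·G + 1)), log2(1 + τ(G)) } < Rs, G < α0 ). -/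
open MeasureTheory ProbabilityTheory Real

/-- The interference threshold `τ(g) = max{0, g/α₀ − 1}`. -/
noncomputable def tau (α0 g : ℝ) : ℝ := max 0 (g / α0 - 1)

/-- The HSIC-PA achievable rate of a secondary user with channel gain `h`,
given the primary channel gain `g`. -/
noncomputable def rateHSIC (P0 Ps α0 h g : ℝ) : ℝ :=
  if Ps * h ≤ tau α0 g then Real.logb 2 (1 + Ps * h)
  else max (Real.logb 2 (1 + Ps * h / (P0 * g + 1))) (Real.logb 2 (1 + tau α0 g))

lemma tau_nonneg (α0 g : ℝ) : 0 ≤ tau α0 g := le_max_left _ _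

lemma expMeasure_singleton (r x : ℝ) : expMeasure r {x} = 0 := by
  rw [expMeasure, gammaMeasure, withDensity_apply _ (measurableSet_singleton x)]
  exact setLIntegral_measure_zero _ _ (measure_singleton x)

lemma rate_mono (P0 Ps α0 : ℝ) (hP0 : 0 < P0) (hPs : 0 < Ps) {g h1 h2 : ℝ}
    (hg : 0 ≤ g) (h1n : 0 ≤ h1) (h12 : h1 ≤ h2) :
    rateHSIC P0 Ps α0 h1 g ≤ rateHSIC P0 Ps α0 h2 g := by
  have hd : (0:ℝ) < P0 * g + 1 := by positivity
  have h1p : (0:ℝ) < 1 + Ps * h1 := by nlinarith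
  have hτ := tau_nonneg α0 g
  unfold rateHSIC
  by_cases hc2 : Ps * h2 ≤ tau α0 g
  · have hc1 : Ps * h1 ≤ tau α0 g := le_trans (by nlinarith) hc2
    rw [if_pos hc1, if_pos hc2]
    exact Real.logb_le_logb_of_le one_lt_two h1p (by nlinarith)
  · rw [if_neg hc2]
    by_cases hc1 : Ps * h1 ≤ tau α0 g
    · rw [if_pos hc1]
      exact le_max_of_le_right (Real.logb_le_logb_of_le one_lt_two h1p (by linarith))
    · rw [if_neg hc1]
      refine max_le_max ?_ le_rfl
      have : (0:ℝ) < 1 + Ps * h1 / (P0 * g + 1) := by positivity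
      refine Real.logb_le_logb_of_le one_lt_two this ?_
      have : Ps * h1 / (P0 * g + 1) ≤ Ps * h2 / (P0 * g + 1) :=
        by gcongr <;> nlinarith
      linarith

lemma null_of_indep {Ω : Type*} [MeasurableSpace Ω] (μ : Measure Ω) [IsProbabilityMeasure μ]
    (G X : Ω → ℝ) (hG : Measurable G) (hX : Measurable X)
    (hGd : Measure.map G μ = expMeasure 1) (hXd : Measure.map X μ = expMeasure 1)
    (hind : IndepFun G X μ) (f : ℝ → ℝ) (hf : Measurable f) :
    μ {ω | X ω = f (G ω)} = 0 := by
  haveI : IsProbabilityMeasure (expMeasure 1) := isProbabilityMeasure_expMeasure one_pos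
  have hs : MeasurableSet {p : ℝ × ℝ | p.2 = f p.1} :=
    measurableSet_eq_fun measurable_snd (hf.comp measurable_fst)
  have hmap : Measure.map (fun ω => (G ω, X ω)) μ = (expMeasure 1).prod (expMeasure 1) := by
    rw [(indepFun_iff_map_prod_eq_prod_map_map hG.aemeasurable hX.aemeasurable).mp hind,
      hGd, hXd]
  have hset : {ω | X ω = f (G ω)} = (fun ω => (G ω, X ω)) ⁻¹' {p : ℝ × ℝ | p.2 = f p.1} := rfl
  rw [hset, ← Measure.map_apply (hG.prodMk hX) hs, hmap, Measure.prod_apply hs]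
  have hz : ∀ x : ℝ, (expMeasure 1) (Prod.mk x ⁻¹' {p : ℝ × ℝ | p.2 = f p.1}) = 0 := by
    intro x
    have : Prod.mk x ⁻¹' {p : ℝ × ℝ | p.2 = f p.1} = {f x} := by ext y; simp
    rw [this]; exact expMeasure_singleton 1 (f x)
  simp [hz, expMeasure_singleton]


/-- Lemma 1: the HSIC-PA overall outage probability decomposes as
`P_out = Q̃₁ + Q̃₂ + Q_M + Q_{M+1}`. -/
theorem hsic_pa_outage_decomposition
    {Ω : Type*} [MeasurableSpace Ω] (μ : Measure Ω) [IsProbabilityMeasure μ]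
    (M : ℕ) (hM : 1 ≤ M)
    (P0 Ps R0 Rs : ℝ) (hP0 : 0 < P0) (hPs : 0 < Ps) (hR0 : 0 < R0) (hRs : 0 < Rs)
    (ε0 εs α0 αs α1 : ℝ)
    (hε0 : ε0 = 2 ^ R0 - 1) (hεs : εs = 2 ^ Rs - 1)
    (hα0 : α0 = ε0 / P0) (hαs : αs = εs / Ps) (hα1 : α1 = (1 + εs) * α0)
    (G : Ω → ℝ) (H : Fin M → Ω → ℝ)
    (hGmeas : Measurable G) (hHmeas : ∀ m, Measurable (H m))
    (hGnn : ∀ ω, 0 ≤ G ω) (hHnn : ∀ m ω, 0 ≤ H m ω)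
    (hGdist : Measure.map G μ = expMeasure 1)
    (hHdist : ∀ m, Measure.map (H m) μ = expMeasure 1)
    (hIndep : iIndepFun
      (Fin.cons G H : Fin (M + 1) → Ω → ℝ) μ)
    (Z : Ω → ℝ) (hZ : ∀ ω, Z ω = ⨆ m : Fin M, H m ω) :
    μ {ω | (⨆ m : Fin M, rateHSIC P0 Ps α0 (H m ω) (G ω)) < Rs} =
      -- Q̃₁
      μ {ω | Ps * Z ω > tau α0 (G ω) ∧
             Z ω < (G ω / α0 - 1) * (P0 * G ω + 1) / Ps ∧
             Real.logb 2 (1 + tau α0 (G ω)) < Rs ∧ G ω > α0} +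
      -- Q̃₂
      μ {ω | Ps * Z ω > tau α0 (G ω) ∧
             Z ω > (G ω / α0 - 1) * (P0 * G ω + 1) / Ps ∧
             Real.logb 2 (1 + Ps * Z ω / (P0 * G ω + 1)) < Rs ∧ G ω > α0} +
      -- Q_M
      μ {ω | Ps * Z ω < tau α0 (G ω) ∧
             Real.logb 2 (1 + Ps * Z ω) < Rs ∧ G ω > α0} +
      -- Q_{M+1}
      μ {ω | max (Real.logb 2 (1 + Ps * Z ω / (P0 * G ω + 1)))
               (Real.logb 2 (1 + tau α0 (G ω))) < Rs ∧ G ω < α0} := by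
  classical
  haveI : Nonempty (Fin M) := ⟨⟨0, hM⟩⟩
  haveI : IsProbabilityMeasure (expMeasure 1) := isProbabilityMeasure_expMeasure one_pos
  -- positivity of α0
  have h2R : (1:ℝ) < 2 ^ R0 :=
    (Real.one_lt_rpow_iff_of_pos two_pos).2 (Or.inl ⟨one_lt_two, hR0⟩)
  have hε0pos : 0 < ε0 := by rw [hε0]; linarith
  have hα0pos : 0 < α0 := by rw [hα0]; positivity
  -- basic facts about Z
  have hZmeas : Measurable Z := by
    have hfe : Z = fun ω => ⨆ m, H m ω := funext hZ
    rw [hfe]; exact Measurable.iSup hHmeas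
  have hle : ∀ m ω, H m ω ≤ Z ω := fun m ω => by
    rw [hZ]; exact le_ciSup (f := fun m : Fin M => H m ω) (Set.finite_range _).bddAbove m
  have hattain : ∀ ω, ∃ m, Z ω = H m ω := fun ω => by
    obtain ⟨m, hm⟩ := exists_eq_ciSup_of_finite (f := fun m : Fin M => (H m ω : ℝ))
    exact ⟨m, by rw [hZ]; exact hm.symm⟩
  have hZnn : ∀ ω, 0 ≤ Z ω := fun ω => by
    obtain ⟨m, hm⟩ := hattain ω; rw [hm]; exact hHnn m ω
  have hdpos : ∀ ω, (0:ℝ) < P0 * G ω + 1 := fun ω => by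
    have := hGnn ω; positivity
  -- the sup of rates equals the rate at Z
  have key : ∀ ω, (⨆ m : Fin M, rateHSIC P0 Ps α0 (H m ω) (G ω))
      = rateHSIC P0 Ps α0 (Z ω) (G ω) := by
    intro ω
    apply le_antisymm
    · exact ciSup_le fun m => rate_mono P0 Ps α0 hP0 hPs (hGnn ω) (hHnn m ω) (hle m ω)
    · obtain ⟨m, hm⟩ := hattain ω
      calc rateHSIC P0 Ps α0 (Z ω) (G ω) = rateHSIC P0 Ps α0 (H m ω) (G ω) := by rw [hm]
        _ ≤ _ := le_ciSup (f := fun m : Fin M => rateHSIC P0 Ps α0 (H m ω) (G ω))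
          (Set.finite_range _).bddAbove m
  -- named sets
  set E : Set Ω := {ω | rateHSIC P0 Ps α0 (Z ω) (G ω) < Rs} with hE
  set A1 : Set Ω := {ω | Ps * Z ω > tau α0 (G ω) ∧
      Z ω < (G ω / α0 - 1) * (P0 * G ω + 1) / Ps ∧
      Real.logb 2 (1 + tau α0 (G ω)) < Rs ∧ G ω > α0} with hA1
  set A2 : Set Ω := {ω | Ps * Z ω > tau α0 (G ω) ∧
      Z ω > (G ω / α0 - 1) * (P0 * G ω + 1) / Ps ∧
      Real.logb 2 (1 + Ps * Z ω / (P0 * G ω + 1)) < Rs ∧ G ω > α0} with hA2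
  set A3 : Set Ω := {ω | Ps * Z ω < tau α0 (G ω) ∧
      Real.logb 2 (1 + Ps * Z ω) < Rs ∧ G ω > α0} with hA3
  set A4 : Set Ω := {ω | max (Real.logb 2 (1 + Ps * Z ω / (P0 * G ω + 1)))
      (Real.logb 2 (1 + tau α0 (G ω))) < Rs ∧ G ω < α0} with hA4
  set N : Set Ω := ({ω | G ω = α0} ∪ {ω | Z ω = (G ω / α0 - 1) / Ps}) ∪
      {ω | Z ω = (G ω / α0 - 1) * (P0 * G ω + 1) / Ps} with hN
  -- tau values
  have htauval : ∀ ω, α0 < G ω → tau α0 (G ω) = G ω / α0 - 1 := by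
    intro ω h
    have h1 : (1:ℝ) ≤ G ω / α0 := (one_le_div hα0pos).2 h.le
    exact max_eq_right (by linarith)
  have htau0 : ∀ ω, G ω < α0 → tau α0 (G ω) = 0 := by
    intro ω h
    have h1 : G ω / α0 < 1 := (div_lt_one hα0pos).2 h
    exact max_eq_left (by linarith)
  -- the union of the four events is contained in the outage event
  have hsub1 : ((A1 ∪ A2) ∪ A3) ∪ A4 ⊆ E := by
    intro ω hω
    simp only [hA1, hA2, hA3, hA4, hE, Set.mem_union, Set.mem_setOf_eq] at hω ⊢
    have hd := hdpos ω
    rcases hω with ((⟨hgt, hlt, hb, hga⟩ | ⟨hgt, hlt2, ha, hga⟩) | ⟨hlt, hc, hga⟩) | ⟨hmax, hga⟩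
    · have hτv := htauval ω hga
      unfold rateHSIC
      rw [if_neg (not_le.mpr hgt)]
      refine max_lt (lt_of_le_of_lt ?_ hb) hb
      have hzd : Ps * Z ω / (P0 * G ω + 1) ≤ tau α0 (G ω) := by
        rw [hτv, div_le_iff₀ hd]
        rw [lt_div_iff₀ hPs] at hlt
        nlinarith
      refine Real.logb_le_logb_of_le one_lt_two ?_ (by linarith)
      have := hZnn ω; positivity
    · have hτv := htauval ω hga
      unfold rateHSIC
      rw [if_neg (not_le.mpr hgt)]
      refine max_lt ha (lt_of_le_of_lt ?_ ha)
      have hzd : tau α0 (G ω) ≤ Ps * Z ω / (P0 * G ω + 1) := by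
        rw [hτv, le_div_iff₀ hd]
        rw [gt_iff_lt, div_lt_iff₀ hPs] at hlt2
        nlinarith
      refine Real.logb_le_logb_of_le one_lt_two ?_ (by linarith)
      have := tau_nonneg α0 (G ω); linarith
    · unfold rateHSIC; rw [if_pos hlt.le]; exact hc
    · have hτ0 := htau0 ω hga
      by_cases hc : Ps * Z ω ≤ tau α0 (G ω)
      · have hz0 : Z ω = 0 := by
          rw [hτ0] at hc
          have : Z ω ≤ 0 := by nlinarith [hZnn ω]
          exact le_antisymm this (hZnn ω)
        unfold rateHSIC
        rw [if_pos hc, hz0]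
        simpa using hRs
      · unfold rateHSIC; rw [if_neg hc]; exact hmax
  -- the outage event is contained in the union plus a null set
  have hsub2 : E ⊆ ((((A1 ∪ A2) ∪ A3) ∪ A4) ∪ N) := by
    intro ω hω
    simp only [hE, hA1, hA2, hA3, hA4, hN, Set.mem_union, Set.mem_setOf_eq] at hω ⊢
    rcases lt_trichotomy (G ω) α0 with hga | hga | hga
    · left; right
      refine ⟨?_, hga⟩
      have hτ0 := htau0 ω hga
      by_cases hc : Ps * Z ω ≤ tau α0 (G ω)
      · have hz0 : Z ω = 0 := by
          rw [hτ0] at hc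
          have : Z ω ≤ 0 := by nlinarith [hZnn ω]
          exact le_antisymm this (hZnn ω)
        rw [hz0, hτ0]
        simpa using hRs
      · unfold rateHSIC at hω; rw [if_neg hc] at hω; exact hω
    · right; left; left; exact hga
    · have hτv := htauval ω hga
      rcases lt_trichotomy (Ps * Z ω) (tau α0 (G ω)) with h | h | h
      · left; left; right
        unfold rateHSIC at hω; rw [if_pos h.le] at hω
        exact ⟨h, hω, hga⟩
      · right; left; right
        rw [hτv] at h
        rw [eq_div_iff (ne_of_gt hPs)]
        linarith [mul_comm Ps (Z ω)]
      · unfold rateHSIC at hω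
        rw [if_neg (not_le.mpr h)] at hω
        obtain ⟨ha, hb⟩ := max_lt_iff.mp hω
        rcases lt_trichotomy (Z ω) ((G ω / α0 - 1) * (P0 * G ω + 1) / Ps) with h2 | h2 | h2
        · left; left; left; left; exact ⟨h, h2, hb, hga⟩
        · right; right; exact h2
        · left; left; left; right; exact ⟨h, h2, ha, hga⟩
  -- N is a null set
  have hIndepGH : ∀ m : Fin M, IndepFun G (H m) μ := by
    intro m
    have := hIndep.indepFun (i := 0) (j := m.succ) (Fin.succ_ne_zero m).symm
    simpa using this
  have hnullf : ∀ f : ℝ → ℝ, Measurable f → μ {ω | Z ω = f (G ω)} = 0 := by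
    intro f hf
    have hsub : {ω | Z ω = f (G ω)} ⊆ ⋃ m : Fin M, {ω | H m ω = f (G ω)} := by
      intro ω hω
      obtain ⟨m, hm⟩ := hattain ω
      refine Set.mem_iUnion.2 ⟨m, ?_⟩
      simp only [Set.mem_setOf_eq] at hω ⊢
      rw [← hm]; exact hω
    refine measure_mono_null hsub (measure_iUnion_null fun m => ?_)
    exact null_of_indep μ G (H m) hGmeas (hHmeas m) hGdist (hHdist m) (hIndepGH m) f hf
  have hNnull : μ N = 0 := by
    rw [hN]
    refine measure_union_null (measure_union_null ?_ ?_) ?_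
    · have hset : {ω | G ω = α0} = G ⁻¹' {α0} := rfl
      rw [hset, ← Measure.map_apply hGmeas (measurableSet_singleton α0), hGdist]
      exact expMeasure_singleton 1 α0
    · exact hnullf (fun g => (g / α0 - 1) / Ps) (by fun_prop)
    · exact hnullf (fun g => (g / α0 - 1) * (P0 * g + 1) / Ps) (by fun_prop)
  -- measurability
  have htauM : Measurable fun g : ℝ => tau α0 g := by
    unfold tau; fun_prop
  have hlogbM : Measurable (Real.logb 2) := Real.measurable_log.div_const (Real.log 2)
  have hf2M : Measurable fun g : ℝ => (g / α0 - 1) * (P0 * g + 1) / Ps := by fun_prop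
  have hm1 : MeasurableSet {ω | Ps * Z ω > tau α0 (G ω)} :=
    measurableSet_lt (htauM.comp hGmeas) (hZmeas.const_mul Ps)
  have hmga : MeasurableSet {ω | G ω > α0} := measurableSet_lt measurable_const hGmeas
  have hmlA : Measurable fun ω => Real.logb 2 (1 + Ps * Z ω / (P0 * G ω + 1)) :=
    hlogbM.comp (measurable_const.add ((hZmeas.const_mul Ps).div
      ((measurable_const.mul hGmeas).add measurable_const)))
  have hmlB : Measurable fun ω => Real.logb 2 (1 + tau α0 (G ω)) :=
    hlogbM.comp (measurable_const.add (htauM.comp hGmeas))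
  have hA2m : MeasurableSet A2 := by
    rw [hA2]
    exact hm1.inter ((measurableSet_lt (hf2M.comp hGmeas) hZmeas).inter
      ((measurableSet_lt hmlA measurable_const).inter hmga))
  have hA3m : MeasurableSet A3 := by
    rw [hA3]
    exact (measurableSet_lt (hZmeas.const_mul Ps) (htauM.comp hGmeas)).inter
      ((measurableSet_lt (hlogbM.comp (measurable_const.add (hZmeas.const_mul Ps)))
        measurable_const).inter hmga)
  have hA4m : MeasurableSet A4 := by
    rw [hA4]
    exact (measurableSet_lt (hmlA.max hmlB) measurable_const).inter
      (measurableSet_lt hGmeas measurable_const)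
  -- disjointness
  have hd12 : Disjoint A1 A2 := by
    rw [hA1, hA2, Set.disjoint_left]
    rintro ω ⟨-, h1, -, -⟩ ⟨-, h2, -, -⟩
    exact absurd h2 (not_lt.mpr h1.le)
  have hd123 : Disjoint (A1 ∪ A2) A3 := by
    rw [hA1, hA2, hA3, Set.disjoint_left]
    rintro ω (⟨h1, -, -, -⟩ | ⟨h1, -, -, -⟩) ⟨h2, -, -⟩ <;>
      exact absurd h2 (not_lt.mpr h1.le)
  have hd14 : Disjoint ((A1 ∪ A2) ∪ A3) A4 := by
    rw [hA1, hA2, hA3, hA4, Set.disjoint_left]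
    rintro ω ((⟨-, -, -, h1⟩ | ⟨-, -, -, h1⟩) | ⟨-, -, h1⟩) ⟨-, h2⟩ <;>
      exact absurd h2 (not_lt.mpr h1.le)
  -- conclusion
  have hgoal1 : {ω | (⨆ m : Fin M, rateHSIC P0 Ps α0 (H m ω) (G ω)) < Rs} = E := by
    ext ω; simp only [hE, Set.mem_setOf_eq, key ω]
  rw [hgoal1]
  have hEA : μ E = μ (((A1 ∪ A2) ∪ A3) ∪ A4) := by
    apply le_antisymm
    · calc μ E ≤ μ (((((A1 ∪ A2) ∪ A3) ∪ A4) ∪ N)) := measure_mono hsub2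
        _ ≤ μ (((A1 ∪ A2) ∪ A3) ∪ A4) + μ N := measure_union_le _ _
        _ = μ (((A1 ∪ A2) ∪ A3) ∪ A4) := by rw [hNnull, add_zero]
    · exact measure_mono hsub1
  rw [hEA, measure_union hd14 hA4m, measure_union hd123 hA3m, measure_union hd12 hA2m]
end

section
/- The HSIC-PA overall outage probability equals Pout = Σ_{i=0}^{M} C(M,i)·(−1)^i·e^{−i·αs}·(1 − e^{−(αs·P0·i + 1)·α1})/(αs·P0·i + 1) + (1 − e^{−αs})^M·e^{−α1}, where C(M,i) denotes the binomial coefficient. -/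
open MeasureTheory ProbabilityTheory Real

open Set in
/-- Pointwise characterization of the per-user outage event. -/
lemma rate_lt_iff {P0 Ps Rs εs α0 αs α1 : ℝ} (hP0 : 0 < P0) (hPs : 0 < Ps)
    (hεs : 0 < εs) (hα0 : 0 < α0)
    (hRs : Rs = Real.logb 2 (1 + εs)) (hαs : αs = εs / Ps) (hα1 : α1 = (1 + εs) * α0)
    {g h : ℝ} (hg : 0 ≤ g) (hh : 0 ≤ h) :
    rateHSIC P0 Ps α0 h g < Rs ↔ h < (if g < α1 then αs * (P0 * g + 1) else αs) := by
  have h2 : (1:ℝ) < 2 := one_lt_two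
  have hτ0 : 0 ≤ tau α0 g := le_max_left _ _
  have hPg : (0:ℝ) < P0 * g + 1 := by nlinarith
  have key : ∀ x : ℝ, 0 ≤ x → (Real.logb 2 (1 + x) < Rs ↔ x < εs) := by
    intro x hx
    rw [hRs, Real.logb_lt_logb_iff h2 (by linarith) (by linarith)]
    constructor <;> intro <;> linarith
  by_cases hgα : g < α1
  · rw [if_pos hgα]
    have hτlt : tau α0 g < εs := by
      apply max_lt hεs
      have : g / α0 < 1 + εs := (div_lt_iff₀ hα0).2 (by rw [hα1] at hgα; linarith)
      linarith
    unfold rateHSIC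
    split_ifs with hcase
    · -- Ps * h ≤ tau, both sides true
      have h1 : Ps * h < εs := lt_of_le_of_lt hcase hτlt
      have h2' : h < αs * (P0 * g + 1) := by
        rw [hαs]
        have : εs ≤ εs * (P0 * g + 1) := le_mul_of_one_le_right hεs.le (by nlinarith)
        rw [div_mul_eq_mul_div, lt_div_iff₀ hPs]
        nlinarith
      constructor
      · intro _; exact h2'
      · intro _
        rw [key _ (by positivity)]
        exact h1
    · rw [max_lt_iff]
      have hdiv : (0:ℝ) ≤ Ps * h / (P0 * g + 1) := by positivity
      rw [key _ hdiv, key _ hτ0]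
      constructor
      · rintro ⟨h1, -⟩
        rw [div_lt_iff₀ hPg] at h1
        rw [hαs, div_mul_eq_mul_div, lt_div_iff₀ hPs]
        nlinarith
      · intro h1
        refine ⟨?_, hτlt⟩
        rw [div_lt_iff₀ hPg]
        rw [hαs, div_mul_eq_mul_div, lt_div_iff₀ hPs] at h1
        nlinarith
  · rw [if_neg hgα]
    push_neg at hgα
    have hτge : εs ≤ tau α0 g := by
      refine le_max_of_le_right ?_
      rw [le_sub_iff_add_le, le_div_iff₀ hα0]
      rw [hα1] at hgα
      nlinarith
    unfold rateHSIC
    split_ifs with hcase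
    · rw [key _ (by positivity)]
      rw [hαs, lt_div_iff₀ hPs]
      constructor <;> intro <;> nlinarith
    · push_neg at hcase
      have hhge : ¬ h < αs := by
        rw [not_lt, hαs, div_le_iff₀ hPs]
        nlinarith
      simp only [hhge, iff_false, not_lt, max_lt_iff, not_and]
      intro _
      rw [hRs]
      exact Real.logb_le_logb_of_le h2 (by linarith) (by linarith)

/-- Independent random variables have product joint law. -/
lemma map_fun_eq_pi_map {Ω : Type*} [MeasurableSpace Ω] (μ : Measure Ω)
    [IsProbabilityMeasure μ] {n : ℕ} (X : Fin n → Ω → ℝ) (hX : ∀ i, Measurable (X i))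
    (hind : iIndepFun X μ) :
    Measure.map (fun ω i => X i ω) μ = Measure.pi (fun i => Measure.map (X i) μ) := by
  haveI : ∀ i, IsProbabilityMeasure (Measure.map (X i) μ) :=
    fun i => Measure.isProbabilityMeasure_map (hX i).aemeasurable
  haveI : ∀ i, SigmaFinite (Measure.map (X i) μ) := fun i => inferInstance
  refine (Measure.pi_eq fun s hs => ?_).symm
  rw [Measure.map_apply (measurable_pi_lambda _ fun i => hX i) (MeasurableSet.univ_pi hs)]
  have : (fun ω i => X i ω) ⁻¹' (Set.pi Set.univ s) = ⋂ i, X i ⁻¹' s i := by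
    ext ω; simp [Set.mem_pi]
  rw [this, hind.meas_iInter fun i => ⟨s i, hs i, rfl⟩]
  exact Finset.prod_congr rfl fun i _ =>
    (Measure.map_apply (hX i) (hs i)).symm

/-- Value of the rate-1 exponential measure on `Iio t` for `0 ≤ t`. -/
lemma expMeasure_one_Iio {t : ℝ} (ht : 0 ≤ t) :
    expMeasure 1 (Set.Iio t) = ENNReal.ofReal (1 - Real.exp (-t)) := by
  have hsing : expMeasure 1 ({t} : Set ℝ) = 0 := by
    have habs : expMeasure 1 ≪ (volume : Measure ℝ) := by
      rw [expMeasure, gammaMeasure]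
      exact withDensity_absolutelyContinuous _ _
    exact habs (volume_singleton)
  have : expMeasure 1 (Set.Iio t) = expMeasure 1 (Set.Iic t) := by
    rw [← Set.Iio_union_right]
    exact le_antisymm (measure_mono Set.subset_union_left)
      ((measure_union_le _ _).trans (by simp [hsing]))
  rw [this]
  have hwd : expMeasure 1 = (volume : Measure ℝ).withDensity (exponentialPDF 1) := rfl
  rw [hwd, withDensity_apply _ measurableSet_Iic,
    lintegral_exponentialPDF_eq_antiDeriv one_pos t, if_pos ht, one_mul]

lemma integral_exp_neg_mul {k b : ℝ} (hk : k ≠ 0) :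
    ∫ g in (0:ℝ)..b, Real.exp (-k * g) = (1 - Real.exp (-k * b)) / k := by
  have h := intervalIntegral.integral_comp_mul_left (a := (0:ℝ)) (b := b)
    (fun x => Real.exp x) (neg_ne_zero.2 hk)
  simp only [integral_exp, mul_zero, Real.exp_zero, smul_eq_mul] at h
  rw [h, eq_div_iff hk]
  linear_combination (1 - Real.exp (-k * b)) * (mul_inv_cancel₀ hk)

/-- Theorem 1: closed form for the HSIC-PA overall outage probability. -/
theorem hsic_pa_outage_closed_form
    {Ω : Type*} [MeasurableSpace Ω] (μ : Measure Ω) [IsProbabilityMeasure μ]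
    (M : ℕ) (hM : 1 ≤ M)
    (P0 Ps R0 Rs : ℝ) (hP0 : 0 < P0) (hPs : 0 < Ps) (hR0 : 0 < R0) (hRs : 0 < Rs)
    (ε0 εs α0 αs α1 : ℝ)
    (hε0 : ε0 = 2 ^ R0 - 1) (hεs : εs = 2 ^ Rs - 1)
    (hα0 : α0 = ε0 / P0) (hαs : αs = εs / Ps) (hα1 : α1 = (1 + εs) * α0)
    (G : Ω → ℝ) (H : Fin M → Ω → ℝ)
    (hGmeas : Measurable G) (hHmeas : ∀ m, Measurable (H m))
    (hGnn : ∀ ω, 0 ≤ G ω) (hHnn : ∀ m ω, 0 ≤ H m ω)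
    (hGdist : Measure.map G μ = expMeasure 1)
    (hHdist : ∀ m, Measure.map (H m) μ = expMeasure 1)
    (hIndep : iIndepFun
      (Fin.cons G H : Fin (M + 1) → Ω → ℝ) μ)
    (Z : Ω → ℝ) (hZ : ∀ ω, Z ω = ⨆ m : Fin M, H m ω)
    :
    (μ {ω | (⨆ m : Fin M, rateHSIC P0 Ps α0 (H m ω) (G ω)) < Rs}).toReal =
      (∑ i ∈ Finset.range (M + 1),
        (M.choose i : ℝ) * (-1 : ℝ) ^ i * Real.exp (-(i : ℝ) * αs) *
          (1 - Real.exp (-(αs * P0 * i + 1) * α1)) / (αs * P0 * i + 1)) +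
      (1 - Real.exp (-αs)) ^ M * Real.exp (-α1) := by
  classical
  have h2 : (1:ℝ) < 2 := one_lt_two
  have hεs_pos : 0 < εs := by
    rw [hεs]
    have : (1:ℝ) < 2 ^ Rs := (Real.one_lt_rpow_iff_of_pos two_pos).2 (Or.inl ⟨h2, hRs⟩)
    linarith
  have hε0_pos : 0 < ε0 := by
    rw [hε0]
    have : (1:ℝ) < 2 ^ R0 := (Real.one_lt_rpow_iff_of_pos two_pos).2 (Or.inl ⟨h2, hR0⟩)
    linarith
  have hα0_pos : 0 < α0 := hα0 ▸ div_pos hε0_pos hP0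
  have hαs_pos : 0 < αs := hαs ▸ div_pos hεs_pos hPs
  have hα1_pos : 0 < α1 := hα1 ▸ mul_pos (by linarith) hα0_pos
  have hRs_eq : Rs = Real.logb 2 (1 + εs) := by
    rw [hεs, show (1:ℝ) + (2 ^ Rs - 1) = 2 ^ Rs by ring,
      Real.logb_rpow two_pos (by norm_num)]
  set ν : Measure ℝ := expMeasure 1 with hν
  haveI : IsProbabilityMeasure ν := isProbabilityMeasure_expMeasure one_pos
  set c : ℝ → ℝ := fun g => if g < α1 then αs * (P0 * g + 1) else αs with hcdef
  have hc_meas : Measurable c := by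
    refine Measurable.ite (measurableSet_lt measurable_id measurable_const) ?_ measurable_const
    exact ((measurable_const.mul measurable_id).add_const 1).const_mul αs
  have hc_pos : ∀ g : ℝ, 0 ≤ g → 0 < c g := by
    intro g hg
    by_cases hgα : g < α1
    · have hcg : c g = αs * (P0 * g + 1) := by simp [hcdef, hgα]
      rw [hcg]; exact mul_pos hαs_pos (by nlinarith [mul_nonneg hP0.le hg])
    · have hcg : c g = αs := by simp [hcdef, hgα]
      rw [hcg]; exact hαs_pos
  have hfac : ∀ g : ℝ, 0 ≤ g → 0 ≤ 1 - Real.exp (-(c g)) := by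
    intro g hg
    have h1 := hc_pos g hg
    have : Real.exp (-(c g)) ≤ 1 := Real.exp_le_one_iff.2 (by linarith)
    linarith
  -- the random vector and the target set
  set X : Ω → (Fin (M+1) → ℝ) := fun ω i => (Fin.cons G H : Fin (M + 1) → Ω → ℝ) i ω with hXdef
  have hXi_meas : ∀ i : Fin (M+1), Measurable ((Fin.cons G H : Fin (M + 1) → Ω → ℝ) i) := by
    intro i
    rcases Fin.eq_zero_or_eq_succ i with h0 | ⟨m, hm⟩
    · subst h0; simpa using hGmeas
    · subst hm; simpa using hHmeas m
  have hX_meas : Measurable X := measurable_pi_lambda _ hXi_meas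
  set T : Set (Fin (M+1) → ℝ) := {x | ∀ m : Fin M, x m.succ < c (x 0)} with hTdef
  have hT_meas : MeasurableSet T := by
    have hT' : T = ⋂ m : Fin M, {x : Fin (M+1) → ℝ | x m.succ < c (x 0)} := by
      ext x; simp [hTdef]
    rw [hT']
    exact MeasurableSet.iInter fun m =>
      measurableSet_lt (measurable_pi_apply _) (hc_meas.comp (measurable_pi_apply 0))
  haveI : Nonempty (Fin M) := Fin.pos_iff_nonempty.mp hM
  have hset : {ω | (⨆ m : Fin M, rateHSIC P0 Ps α0 (H m ω) (G ω)) < Rs} = X ⁻¹' T := by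
    ext ω
    simp only [Set.mem_setOf_eq, Set.mem_preimage, hXdef, hTdef]
    have hsup : (⨆ m : Fin M, rateHSIC P0 Ps α0 (H m ω) (G ω)) < Rs ↔
        ∀ m : Fin M, rateHSIC P0 Ps α0 (H m ω) (G ω) < Rs := by
      constructor
      · intro hlt m
        exact (le_ciSup (Set.Finite.bddAbove (Set.finite_range _)) m).trans_lt hlt
      · intro hall
        obtain ⟨m0, hm0⟩ := exists_eq_ciSup_of_finite
          (f := fun m : Fin M => rateHSIC P0 Ps α0 (H m ω) (G ω))
        rw [← hm0]; exact hall m0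
    rw [hsup]
    refine forall_congr' fun m => ?_
    rw [rate_lt_iff hP0 hPs hεs_pos hα0_pos hRs_eq hαs hα1 (hGnn ω) (hHnn m ω)]
    simp [hcdef, Fin.cons_succ, Fin.cons_zero]
  -- the joint law of X
  have hXlaw : Measure.map X μ = Measure.pi (fun _ : Fin (M+1) => ν) := by
    have h1 := map_fun_eq_pi_map μ (Fin.cons G H) hXi_meas hIndep
    have hmarg : (fun i : Fin (M+1) => Measure.map ((Fin.cons G H : Fin (M + 1) → Ω → ℝ) i) μ) = fun _ => ν := by
      funext i
      rcases Fin.eq_zero_or_eq_succ i with h0 | ⟨m, hm⟩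
      · subst h0; simpa using hGdist
      · subst hm; simpa using hHdist m
    rw [hXdef, h1, hmarg]
  have step1 : μ {ω | (⨆ m : Fin M, rateHSIC P0 Ps α0 (H m ω) (G ω)) < Rs} =
      Measure.pi (fun _ : Fin (M+1) => ν) T := by
    rw [hset, ← Measure.map_apply hX_meas hT_meas, hXlaw]
  -- split off the first coordinate
  set S : Set (ℝ × (Fin M → ℝ)) := {p | ∀ m : Fin M, p.2 m < c p.1} with hSdef
  have hS_meas : MeasurableSet S := by
    have hS' : S = ⋂ m : Fin M, {p : ℝ × (Fin M → ℝ) | p.2 m < c p.1} := by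
      ext p; simp [hSdef]
    rw [hS']
    exact MeasurableSet.iInter fun m =>
      measurableSet_lt (measurable_snd.eval) (hc_meas.comp measurable_fst)
  have hTS : T = (MeasurableEquiv.piFinSuccAbove (fun _ : Fin (M+1) => ℝ) 0) ⁻¹' S := by
    ext x
    simp [hTdef, hSdef, MeasurableEquiv.piFinSuccAbove, Fin.zero_succAbove, Fin.tail]
  have step2 : Measure.pi (fun _ : Fin (M+1) => ν) T =
      (ν.prod (Measure.pi fun _ : Fin M => ν)) S := by
    rw [hTS]
    exact (measurePreserving_piFinSuccAbove (fun _ : Fin (M+1) => ν) 0).measure_preimage_equiv S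
  have step3 : (ν.prod (Measure.pi fun _ : Fin M => ν)) S =
      ∫⁻ g, (ν (Set.Iio (c g))) ^ M ∂ν := by
    rw [Measure.prod_apply hS_meas]
    refine lintegral_congr fun g => ?_
    have hpre : (Prod.mk g ⁻¹' S) = Set.pi Set.univ (fun _ : Fin M => Set.Iio (c g)) := by
      ext y; simp [hSdef, Set.mem_pi]
    rw [hpre, Measure.pi_pi]
    simp [Finset.prod_const]
  -- pass to a real integral
  set φ : ℝ → ℝ := fun g => Real.exp (-g) * (1 - Real.exp (-(c g))) ^ M with hφdef
  have hφ_meas : Measurable φ :=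
    (Real.measurable_exp.comp measurable_neg).mul
      ((measurable_const.sub (Real.measurable_exp.comp hc_meas.neg)).pow_const M)
  have hφ_int : IntegrableOn φ (Set.Ioi (0:ℝ)) := by
    refine Integrable.mono (g := fun g => Real.exp (-g)) ?_
      hφ_meas.aestronglyMeasurable.restrict ?_
    · exact (by simpa using exp_neg_integrableOn_Ioi 0 one_pos : IntegrableOn (fun x : ℝ => Real.exp (-x)) (Set.Ioi 0))
    · refine (ae_restrict_iff' measurableSet_Ioi).2 (Filter.Eventually.of_forall fun g hg => ?_)
      have h0 : 0 ≤ 1 - Real.exp (-(c g)) := hfac g (le_of_lt hg)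
      have hle : Real.exp (-(c g)) ≤ 1 := by linarith
      have h1 : (1 - Real.exp (-(c g))) ^ M ≤ 1 :=
        pow_le_one₀ h0 (by linarith [Real.exp_pos (-(c g))])
      rw [Real.norm_eq_abs, Real.norm_eq_abs, hφdef]
      rw [abs_of_nonneg (mul_nonneg (Real.exp_pos _).le (pow_nonneg h0 M)),
        abs_of_nonneg (Real.exp_pos _).le]
      nlinarith [Real.exp_pos (-g)]
  have hφ_nn : 0 ≤ᵐ[volume.restrict (Set.Ioi (0:ℝ))] φ := by
    refine (ae_restrict_iff' measurableSet_Ioi).2 (Filter.Eventually.of_forall fun g hg => ?_)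
    exact mul_nonneg (Real.exp_pos _).le (pow_nonneg (hfac g (le_of_lt hg)) M)
  have step4 : ∫⁻ g, (ν (Set.Iio (c g))) ^ M ∂ν =
      ENNReal.ofReal (∫ g in Set.Ioi (0:ℝ), φ g) := by
    have hν_wd : ν = (volume : Measure ℝ).withDensity (exponentialPDF 1) := rfl
    have hmeasF : Measurable fun g => ν (Set.Iio (c g)) ^ M := by
      have hmono : Monotone fun t : ℝ => ν (Set.Iio t) :=
        fun a b hab => measure_mono (Set.Iio_subset_Iio hab)
      exact (hmono.measurable.comp hc_meas).pow_const M
    refine (lintegral_withDensity_eq_lintegral_mul volume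
      (show Measurable (exponentialPDF 1) from (measurable_exponentialPDFReal 1).ennreal_ofReal)
      hmeasF).trans ?_
    have hpt : (fun g => (exponentialPDF 1 * fun g => ν (Set.Iio (c g)) ^ M) g) =
        (Set.Ici (0:ℝ)).indicator fun g => ENNReal.ofReal (φ g) := by
      funext g
      simp only [Pi.mul_apply]
      by_cases hg : (0:ℝ) ≤ g
      · rw [Set.indicator_of_mem (show g ∈ Set.Ici (0:ℝ) from hg), exponentialPDF_of_nonneg hg, one_mul]
        have hIio : ν (Set.Iio (c g)) = ENNReal.ofReal (1 - Real.exp (-(c g))) :=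
          expMeasure_one_Iio (hc_pos g hg).le
        rw [hIio, ← ENNReal.ofReal_pow (hfac g hg), ← ENNReal.ofReal_mul (Real.exp_pos _).le]
        simp [hφdef, one_mul]
      · rw [Set.indicator_of_notMem (show g ∉ Set.Ici (0:ℝ) from hg), exponentialPDF_of_neg (lt_of_not_ge hg), zero_mul]
    rw [hpt, lintegral_indicator measurableSet_Ici,
      ← setLIntegral_congr (Ioi_ae_eq_Ici (a := (0:ℝ))),
      ← ofReal_integral_eq_lintegral_ofReal hφ_int hφ_nn]
  have hI_nn : 0 ≤ ∫ g in Set.Ioi (0:ℝ), φ g :=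
    setIntegral_nonneg measurableSet_Ioi fun g hg =>
      mul_nonneg (Real.exp_pos _).le (pow_nonneg (hfac g (le_of_lt hg)) M)
  -- split the integral
  have hsplit : ∫ g in Set.Ioi (0:ℝ), φ g =
      (∫ g in Set.Ioc (0:ℝ) α1, φ g) + ∫ g in Set.Ioi α1, φ g := by
    rw [← setIntegral_union (Set.Ioc_disjoint_Ioi le_rfl) measurableSet_Ioi
      (hφ_int.mono_set Set.Ioc_subset_Ioi_self)
      (hφ_int.mono_set (Set.Ioi_subset_Ioi hα1_pos.le)),
      Set.Ioc_union_Ioi_eq_Ioi hα1_pos.le]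
  have h2nd : ∫ g in Set.Ioi α1, φ g = (1 - Real.exp (-αs)) ^ M * Real.exp (-α1) := by
    have hEq : ∀ g ∈ Set.Ioi α1, φ g = Real.exp (-g) * (1 - Real.exp (-αs)) ^ M := by
      intro g hg
      simp only [hφdef, hcdef]
      rw [if_neg (not_lt.2 (le_of_lt hg))]
    rw [setIntegral_congr_fun measurableSet_Ioi hEq, integral_mul_const,
      integral_exp_neg_Ioi]
    ring
  have h1st : ∫ g in Set.Ioc (0:ℝ) α1, φ g =
      ∑ i ∈ Finset.range (M + 1),
        (M.choose i : ℝ) * (-1 : ℝ) ^ i * Real.exp (-(i : ℝ) * αs) *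
          (1 - Real.exp (-(αs * P0 * i + 1) * α1)) / (αs * P0 * i + 1) := by
    have hcongr : ∫ g in Set.Ioc (0:ℝ) α1, φ g =
        ∫ g in Set.Ioc (0:ℝ) α1, Real.exp (-g) * (1 - Real.exp (-(αs * (P0 * g + 1)))) ^ M := by
      rw [integral_Ioc_eq_integral_Ioo, integral_Ioc_eq_integral_Ioo]
      refine setIntegral_congr_fun measurableSet_Ioo fun g hg => ?_
      simp only [hφdef, hcdef]
      rw [if_pos hg.2]
    have hexpand : ∀ g : ℝ, Real.exp (-g) * (1 - Real.exp (-(αs * (P0 * g + 1)))) ^ M =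
        ∑ i ∈ Finset.range (M + 1),
          (M.choose i : ℝ) * (-1 : ℝ) ^ i * Real.exp (-(i : ℝ) * αs) *
            Real.exp (-(αs * P0 * i + 1) * g) := by
      intro g
      have hpow : (1 - Real.exp (-(αs * (P0 * g + 1)))) ^ M =
          ∑ i ∈ Finset.range (M + 1),
            (-Real.exp (-(αs * (P0 * g + 1)))) ^ i * (1:ℝ) ^ (M - i) * (M.choose i) := by
        rw [show (1:ℝ) - Real.exp (-(αs * (P0 * g + 1))) =
          -Real.exp (-(αs * (P0 * g + 1))) + 1 by ring, add_pow]
      rw [hpow, Finset.mul_sum]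
      refine Finset.sum_congr rfl fun i _ => ?_
      rw [neg_pow, one_pow, ← Real.exp_nat_mul]
      rw [show Real.exp (-g) * ((-1:ℝ) ^ i * Real.exp ((i:ℝ) * -(αs * (P0 * g + 1))) * 1 *
          (M.choose i : ℝ)) = (M.choose i : ℝ) * (-1:ℝ) ^ i *
          (Real.exp (-g) * Real.exp ((i:ℝ) * -(αs * (P0 * g + 1)))) by ring,
        ← Real.exp_add]
      rw [show -g + (i:ℝ) * -(αs * (P0 * g + 1)) = -(i:ℝ) * αs + -(αs * P0 * i + 1) * g by ring,
        Real.exp_add]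
      ring
    rw [hcongr, ← intervalIntegral.integral_of_le hα1_pos.le]
    simp only [hexpand]
    rw [intervalIntegral.integral_finset_sum (fun i _ => (Continuous.intervalIntegrable
      (by fun_prop) _ _))]
    refine Finset.sum_congr rfl fun i _ => ?_
    have hk_pos : 0 < αs * P0 * (i:ℝ) + 1 := by
      have : 0 ≤ αs * P0 * (i:ℝ) :=
        mul_nonneg (mul_nonneg hαs_pos.le hP0.le) (Nat.cast_nonneg i)
      linarith
    rw [intervalIntegral.integral_const_mul, integral_exp_neg_mul hk_pos.ne']
    ring
  rw [step1, step2, step3, step4, ENNReal.toReal_ofReal hI_nn, hsplit, h1st, h2nd]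
end

section
/- The HSIC-PA overall outage probability admits the integral representation Pout = ∫_0^{α1} e^{−x}·(1 − e^{−αs·(P0·x + 1)})^M dx + (1 − e^{−αs})^M·e^{−α1}. -/
open MeasureTheory ProbabilityTheory Real

open Set

lemma logb_aux' {Rs εs t : ℝ} (hεs : εs = 2 ^ Rs - 1) (ht : 0 ≤ t) :
    Real.logb 2 (1 + t) < Rs ↔ t < εs := by
  rw [Real.logb_lt_iff_lt_rpow one_lt_two (by linarith)]
  constructor <;> intro h <;> [skip; skip] <;> subst hεs <;> linarith

lemma rate_char' {P0 Ps Rs ε0 εs α0 αs α1 h g : ℝ}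
    (hP0 : 0 < P0) (hPs : 0 < Ps) (hRs : 0 < Rs) (hε0 : 0 < ε0) (hεs : εs = 2 ^ Rs - 1)
    (hα0 : α0 = ε0 / P0) (hαs : αs = εs / Ps) (hα1 : α1 = (1 + εs) * α0)
    (hh : 0 ≤ h) (hg : 0 ≤ g) :
    rateHSIC P0 Ps α0 h g < Rs ↔ h < (if g < α1 then αs * (P0 * g + 1) else αs) := by
  have hεs' : 0 < εs := by
    have h2 := Real.rpow_lt_rpow_of_exponent_lt one_lt_two hRs
    rw [Real.rpow_zero] at h2
    simp [hεs]; linarith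
  have hα0' : 0 < α0 := by rw [hα0]; positivity
  have hαs' : 0 < αs := by rw [hαs]; positivity
  have htau : 0 ≤ tau α0 g := le_max_left _ _
  have hPg : (0:ℝ) < P0 * g + 1 := by positivity
  have htau_iff : tau α0 g < εs ↔ g < α1 := by
    rw [tau, max_lt_iff, hα1]
    constructor
    · rintro ⟨-, h2⟩
      have : g / α0 < 1 + εs := by linarith
      calc g = g / α0 * α0 := by field_simp
        _ < (1 + εs) * α0 := by exact mul_lt_mul_of_pos_right this hα0'
    · intro hlt
      refine ⟨hεs', ?_⟩
      have : g / α0 < 1 + εs := by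
        rw [div_lt_iff₀ hα0']; linarith [hlt]
      linarith
  have hhs : h < αs ↔ Ps * h < εs := by
    rw [hαs, lt_div_iff₀ hPs]; constructor <;> intro <;> linarith [mul_comm Ps h]
  rw [rateHSIC]
  split_ifs with hc hgl hgl
  · rw [logb_aux' hεs (by positivity)]
    have h1 : Ps * h < εs := lt_of_le_of_lt hc (htau_iff.2 hgl)
    have h2 : h < αs := hhs.2 h1
    have : αs ≤ αs * (P0 * g + 1) := by
      nlinarith [mul_nonneg (mul_nonneg hαs'.le hP0.le) hg]
    constructor <;> intro <;> [linarith; exact h1]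
  · rw [logb_aux' hεs (by positivity)]; exact hhs.symm
  · push_neg at hc
    rw [max_lt_iff, logb_aux' hεs (by positivity), logb_aux' hεs htau, htau_iff]
    have : Ps * h / (P0 * g + 1) < εs ↔ h < αs * (P0 * g + 1) := by
      rw [div_lt_iff₀ hPg, hαs]
      rw [div_mul_eq_mul_div, lt_div_iff₀ hPs]
      constructor <;> intro <;> nlinarith
    rw [this]
    simp [hgl]
  · push_neg at hc hgl
    have hts : εs ≤ tau α0 g := not_lt.1 (fun hx => hgl.not_gt (htau_iff.1 hx))
    have hna : ¬ h < αs := by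
      rw [hhs]; push_neg; linarith
    simp only [hna, iff_false, not_lt, max_lt_iff, not_and_or, not_lt]
    right
    rw [Real.le_logb_iff_rpow_le one_lt_two (by linarith)]
    rw [hεs] at hts; linarith

lemma fin_ciSup_lt_iff' {ι : Type*} [Nonempty ι] [Finite ι] {f : ι → ℝ} {a : ℝ} :
    (⨆ i, f i) < a ↔ ∀ i, f i < a := by
  constructor
  · intro h i
    exact (le_ciSup (Set.finite_range f).bddAbove i).trans_lt h
  · intro h
    obtain ⟨i, hi⟩ := exists_eq_ciSup_of_finite (f := f)
    rw [← hi]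
    exact h i

lemma map_eq_pi' {Ω : Type*} [MeasurableSpace Ω] (μ : Measure Ω) [IsProbabilityMeasure μ]
    {n : ℕ} (f : Fin n → Ω → ℝ) (hf : ∀ i, Measurable (f i))
    (hI : iIndepFun f μ) :
    μ.map (fun ω i => f i ω) = Measure.pi (fun i => μ.map (f i)) := by
  haveI : ∀ i, IsProbabilityMeasure (μ.map (f i)) :=
    fun i => Measure.isProbabilityMeasure_map (hf i).aemeasurable
  refine (Measure.pi_eq (μ := fun i => μ.map (f i)) fun s hs => ?_).symm
  rw [Measure.map_apply (measurable_pi_lambda _ fun i => hf i) (MeasurableSet.univ_pi hs)]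
  have h1 : (fun ω i => f i ω) ⁻¹' Set.univ.pi s = ⋂ i ∈ Finset.univ, f i ⁻¹' s i := by
    ext; simp [Set.mem_pi]
  rw [h1, hI.measure_inter_preimage_eq_mul Finset.univ (fun i _ => hs i)]
  exact Finset.prod_congr rfl fun i _ => (Measure.map_apply (hf i) (hs i)).symm

lemma expMeasure_Iio' (t : ℝ) :
    expMeasure 1 (Set.Iio t) = ENNReal.ofReal (if 0 ≤ t then 1 - Real.exp (-t) else 0) := by
  rw [show expMeasure 1 = volume.withDensity (exponentialPDF 1) from rfl,
    withDensity_apply _ measurableSet_Iio, setLIntegral_congr Iio_ae_eq_Iic,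
    lintegral_exponentialPDF_eq_antiDeriv one_pos t]
  norm_num

/-- integral representation of the HSIC-PA overall outage probability. -/
theorem hsic_pa_outage_integral_form
    {Ω : Type*} [MeasurableSpace Ω] (μ : Measure Ω) [IsProbabilityMeasure μ]
    (M : ℕ) (hM : 1 ≤ M)
    (P0 Ps R0 Rs : ℝ) (hP0 : 0 < P0) (hPs : 0 < Ps) (hR0 : 0 < R0) (hRs : 0 < Rs)
    (ε0 εs α0 αs α1 : ℝ)
    (hε0 : ε0 = 2 ^ R0 - 1) (hεs : εs = 2 ^ Rs - 1)
    (hα0 : α0 = ε0 / P0) (hαs : αs = εs / Ps) (hα1 : α1 = (1 + εs) * α0)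
    (G : Ω → ℝ) (H : Fin M → Ω → ℝ)
    (hGmeas : Measurable G) (hHmeas : ∀ m, Measurable (H m))
    (hGnn : ∀ ω, 0 ≤ G ω) (hHnn : ∀ m ω, 0 ≤ H m ω)
    (hGdist : Measure.map G μ = expMeasure 1)
    (hHdist : ∀ m, Measure.map (H m) μ = expMeasure 1)
    (hIndep : iIndepFun
      (Fin.cons G H : Fin (M + 1) → Ω → ℝ) μ)
    (Z : Ω → ℝ) (hZ : ∀ ω, Z ω = ⨆ m : Fin M, H m ω)
    :
    (μ {ω | (⨆ m : Fin M, rateHSIC P0 Ps α0 (H m ω) (G ω)) < Rs}).toReal =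
      (∫ x in (0 : ℝ)..α1,
        Real.exp (-x) * (1 - Real.exp (-αs * (P0 * x + 1))) ^ M) +
      (1 - Real.exp (-αs)) ^ M * Real.exp (-α1) := by
  haveI : Nonempty (Fin M) := ⟨⟨0, hM⟩⟩
  haveI : IsProbabilityMeasure (expMeasure 1) := isProbabilityMeasure_expMeasure one_pos
  have hε0' : 0 < ε0 := by
    have h2 := Real.rpow_lt_rpow_of_exponent_lt one_lt_two hR0
    rw [Real.rpow_zero] at h2
    rw [hε0]; linarith
  have hεs' : 0 < εs := by
    have h2 := Real.rpow_lt_rpow_of_exponent_lt one_lt_two hRs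
    rw [Real.rpow_zero] at h2
    rw [hεs]; linarith
  have hα0' : 0 < α0 := by rw [hα0]; positivity
  have hαs' : 0 < αs := by rw [hαs]; positivity
  have hα1' : 0 < α1 := by rw [hα1]; positivity
  set φ : ℝ → ℝ := fun g => if g < α1 then αs * (P0 * g + 1) else αs with hφdef
  have hφm : Measurable φ := Measurable.ite measurableSet_Iio (by fun_prop) measurable_const
  have hφpos : ∀ x, 0 ≤ x → 0 < φ x := by
    intro x hx
    rw [hφdef]
    dsimp only
    split_ifs
    · nlinarith [mul_nonneg hP0.le hx]
    · exact hαs'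
  -- Step 1: the outage event as a preimage
  have hE : {ω | (⨆ m : Fin M, rateHSIC P0 Ps α0 (H m ω) (G ω)) < Rs}
      = (fun ω i => (Fin.cons G H : Fin (M+1) → Ω → ℝ) i ω) ⁻¹'
        {x : Fin (M+1) → ℝ | ∀ m : Fin M, x m.succ < φ (x 0)} := by
    ext ω
    simp only [Set.mem_setOf_eq, Set.mem_preimage, Fin.cons_succ, Fin.cons_zero]
    rw [fin_ciSup_lt_iff']
    exact forall_congr' fun m =>
      rate_char' hP0 hPs hRs hε0' hεs hα0 hαs hα1 (hHnn m ω) (hGnn ω)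
  have hFmeas : Measurable (fun ω i => (Fin.cons G H : Fin (M+1) → Ω → ℝ) i ω) := by
    refine measurable_pi_lambda _ fun i => ?_
    induction i using Fin.cases with
    | zero => simpa using hGmeas
    | succ m => simpa using hHmeas m
  have hS' : MeasurableSet {x : Fin (M+1) → ℝ | ∀ m : Fin M, x m.succ < φ (x 0)} := by
    have h : {x : Fin (M+1) → ℝ | ∀ m : Fin M, x m.succ < φ (x 0)}
        = ⋂ m : Fin M, {x : Fin (M+1) → ℝ | x m.succ < φ (x 0)} := by ext; simp
    rw [h]
    exact MeasurableSet.iInter fun m =>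
      measurableSet_lt (measurable_pi_apply _) (hφm.comp (measurable_pi_apply 0))
  have hT : MeasurableSet {p : ℝ × (Fin M → ℝ) | ∀ m, p.2 m < φ p.1} := by
    have h : {p : ℝ × (Fin M → ℝ) | ∀ m, p.2 m < φ p.1}
        = ⋂ m : Fin M, {p : ℝ × (Fin M → ℝ) | p.2 m < φ p.1} := by ext; simp
    rw [h]
    exact MeasurableSet.iInter fun m =>
      measurableSet_lt (by fun_prop) (hφm.comp measurable_fst)
  -- Step 2: the joint law is the product of Exp(1)'s
  have hmap : μ.map (fun ω i => (Fin.cons G H : Fin (M+1) → Ω → ℝ) i ω)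
      = Measure.pi (fun _ : Fin (M+1) => expMeasure 1) := by
    rw [map_eq_pi' μ (Fin.cons G H : Fin (M+1) → Ω → ℝ) (fun i => by
      induction i using Fin.cases with
      | zero => simpa using hGmeas
      | succ m => simpa using hHmeas m) hIndep]
    congr 1
    funext i
    induction i using Fin.cases with
    | zero => simpa using hGdist
    | succ m => simpa using hHdist m
  -- Step 3: compute the measure as a lintegral
  have hpre : (MeasurableEquiv.piFinSuccAbove (fun _ : Fin (M+1) => ℝ) 0) ⁻¹'
      {p : ℝ × (Fin M → ℝ) | ∀ m, p.2 m < φ p.1}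
      = {x : Fin (M+1) → ℝ | ∀ m : Fin M, x m.succ < φ (x 0)} := by
    ext x
    simp [MeasurableEquiv.piFinSuccAbove, Fin.removeNth, Fin.zero_succAbove, Fin.tail]
  have hmeas_ev : μ {ω | (⨆ m : Fin M, rateHSIC P0 Ps α0 (H m ω) (G ω)) < Rs}
      = ∫⁻ x, (expMeasure 1 (Set.Iio (φ x))) ^ M ∂(expMeasure 1) := by
    rw [hE, ← Measure.map_apply hFmeas hS', hmap, ← hpre,
      (measurePreserving_piFinSuccAbove (fun _ : Fin (M+1) => expMeasure 1) 0).measure_preimage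
        hT.nullMeasurableSet,
      Measure.prod_apply hT]
    congr 1
    funext x
    have h : Prod.mk x ⁻¹' {p : ℝ × (Fin M → ℝ) | ∀ m, p.2 m < φ p.1}
        = Set.univ.pi fun _ : Fin M => Set.Iio (φ x) := by ext y; simp [Set.mem_pi]
    rw [h, Measure.pi_pi]
    simp [Finset.prod_const]
  -- Step 4: rewrite via density-vs-Lebesgue
  set gfun : ℝ → ℝ := fun x => Real.exp (-x) * (1 - Real.exp (-(φ x))) ^ M with hgdef
  set q : ℝ → ℝ := (Set.Ici (0:ℝ)).indicator gfun with hqdef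
  have hq4 : ∀ x, exponentialPDF 1 x
      * (ENNReal.ofReal (if 0 ≤ φ x then 1 - Real.exp (-(φ x)) else 0)) ^ M
      = ENNReal.ofReal (q x) := by
    intro x
    by_cases hx : (0:ℝ) ≤ x
    · have hφx : 0 ≤ φ x := (hφpos x hx).le
      have h2 : 0 ≤ 1 - Real.exp (-(φ x)) := by
        have := Real.exp_le_one_iff.2 (by linarith : -(φ x) ≤ 0)
        linarith
      rw [exponentialPDF_of_nonneg hx, if_pos hφx, hqdef, Set.indicator_of_mem (Set.mem_Ici.2 hx),
        ← ENNReal.ofReal_pow h2, ← ENNReal.ofReal_mul (by positivity)]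
      congr 1
      rw [hgdef]
      norm_num
    · rw [exponentialPDF_of_neg (lt_of_not_ge hx), zero_mul, hqdef,
        Set.indicator_of_notMem (by simpa using hx), ENNReal.ofReal_zero]
  have hfmeas2 : Measurable fun x : ℝ =>
      (ENNReal.ofReal (if 0 ≤ φ x then 1 - Real.exp (-(φ x)) else 0)) ^ M := by
    have h1 : Measurable fun x : ℝ => (if 0 ≤ φ x then 1 - Real.exp (-(φ x)) else 0) := by
      refine Measurable.ite (measurableSet_le measurable_const hφm) ?_ measurable_const
      fun_prop
    exact h1.ennreal_ofReal.pow_const M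
  have hlint : ∫⁻ x, (expMeasure 1 (Set.Iio (φ x))) ^ M ∂(expMeasure 1)
      = ∫⁻ x, ENNReal.ofReal (q x) := by
    simp_rw [expMeasure_Iio']
    have hpdfm : Measurable (exponentialPDF 1) := (measurable_exponentialPDFReal 1).ennreal_ofReal
    rw [show expMeasure 1 = volume.withDensity (exponentialPDF 1) from rfl,
      lintegral_withDensity_eq_lintegral_mul _ hpdfm hfmeas2]
    exact lintegral_congr hq4
  -- Step 5: integrability and conversion to a Bochner integral
  have hgmeas : Measurable gfun := by
    rw [hgdef]; fun_prop
  have hexpint : IntegrableOn (fun x => Real.exp (-x)) (Set.Ici (0:ℝ)) := by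
    rw [integrableOn_Ici_iff_integrableOn_Ioi]
    simpa using exp_neg_integrableOn_Ioi (0:ℝ) one_pos
  have hgfact : ∀ x ∈ Set.Ici (0:ℝ), 0 ≤ gfun x ∧ gfun x ≤ Real.exp (-x) := by
    intro x hx
    have hφx : 0 < φ x := hφpos x hx
    have h2 : 0 ≤ 1 - Real.exp (-(φ x)) := by
      have := Real.exp_le_one_iff.2 (by linarith : -(φ x) ≤ 0)
      linarith
    have h3 : (1 - Real.exp (-(φ x))) ^ M ≤ 1 := by
      refine pow_le_one₀ h2 ?_
      have := Real.exp_pos (-(φ x))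
      linarith
    have h4 : 0 ≤ (1 - Real.exp (-(φ x))) ^ M := pow_nonneg h2 M
    constructor
    · rw [hgdef]; dsimp only; positivity
    · rw [hgdef]; dsimp only
      nlinarith [Real.exp_pos (-x)]
  have hgint : IntegrableOn gfun (Set.Ici (0:ℝ)) := by
    refine Integrable.mono hexpint hgmeas.aestronglyMeasurable.restrict ?_
    refine (ae_restrict_iff' measurableSet_Ici).2 (Filter.Eventually.of_forall fun x hx => ?_)
    rw [Real.norm_eq_abs, Real.norm_eq_abs, abs_of_nonneg (hgfact x hx).1,
      abs_of_nonneg (Real.exp_pos _).le]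
    exact (hgfact x hx).2
  have hqint : Integrable q := by
    have := (integrable_indicator_iff measurableSet_Ici).2 hgint
    rwa [hqdef]
  have hqnn : ∀ x, 0 ≤ q x := by
    intro x
    rw [hqdef]
    exact Set.indicator_nonneg (fun y hy => (hgfact y hy).1) x
  have hofReal : ∫⁻ x, ENNReal.ofReal (q x) = ENNReal.ofReal (∫ x, q x) :=
    (ofReal_integral_eq_lintegral_ofReal hqint (Filter.Eventually.of_forall hqnn)).symm
  -- Step 6: compute the real integral
  have hq_eq : ∫ x, q x = ∫ x in Set.Ici (0:ℝ), gfun x := by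
    rw [hqdef]; exact integral_indicator measurableSet_Ici
  have hdisj : Disjoint (Set.Ico (0:ℝ) α1) (Set.Ici α1) := by
    rw [Set.disjoint_left]
    rintro x ⟨-, h2⟩ h3
    exact absurd h3 (not_le.2 h2)
  have hunion : Set.Ico (0:ℝ) α1 ∪ Set.Ici α1 = Set.Ici (0:ℝ) :=
    Set.Ico_union_Ici_eq_Ici hα1'.le
  have hint1 : IntegrableOn gfun (Set.Ico (0:ℝ) α1) :=
    hgint.mono_set (fun x hx => hx.1)
  have hint2 : IntegrableOn gfun (Set.Ici α1) :=
    hgint.mono_set (Set.Ici_subset_Ici.2 hα1'.le)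
  have hsplit : ∫ x in Set.Ici (0:ℝ), gfun x
      = (∫ x in Set.Ico (0:ℝ) α1, gfun x) + ∫ x in Set.Ici α1, gfun x := by
    rw [← hunion]
    exact setIntegral_union hdisj measurableSet_Ici hint1 hint2
  have hpiece1 : ∫ x in Set.Ico (0:ℝ) α1, gfun x
      = ∫ x in (0:ℝ)..α1, Real.exp (-x) * (1 - Real.exp (-αs * (P0 * x + 1))) ^ M := by
    rw [intervalIntegral.integral_of_le hα1'.le, integral_Ico_eq_integral_Ioo,
      integral_Ioc_eq_integral_Ioo]
    refine setIntegral_congr_fun measurableSet_Ioo fun x hx => ?_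
    rw [hgdef]
    dsimp only
    rw [hφdef]
    dsimp only
    rw [if_pos hx.2]
    ring_nf
  have hpiece2 : ∫ x in Set.Ici α1, gfun x
      = (1 - Real.exp (-αs)) ^ M * Real.exp (-α1) := by
    have h : ∫ x in Set.Ici α1, gfun x
        = ∫ x in Set.Ici α1, (1 - Real.exp (-αs)) ^ M * Real.exp (-x) := by
      refine setIntegral_congr_fun measurableSet_Ici fun x hx => ?_
      rw [hgdef]
      dsimp only
      rw [hφdef]
      dsimp only
      rw [if_neg (not_lt.2 hx)]
      ring
    rw [h, MeasureTheory.integral_const_mul, integral_Ici_eq_integral_Ioi,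
      integral_exp_neg_Ioi]
  -- Put it all together
  rw [hmeas_ev, hlint, hofReal, ENNReal.toReal_ofReal (integral_nonneg hqnn),
    hq_eq, hsplit, hpiece1, hpiece2]
end

section
/- There exist constants C > 0 and P* > 0 such that for all P ≥ P*, |Pout(P) − εs^M/P^M| ≤ C/P^{M+1}; that is, at high SNR with equal powers P0 = Ps = P, the HSIC-PA outage probability equals εs^M/P^M up to an error of order P^{−(M+1)}. -/
open MeasureTheory ProbabilityTheory Real Filter

/-- The HSIC-PA overall outage probability with equal powers `P0 = Ps = P`, realized on
the canonical probability space carrying `M + 1` i.i.d. rate-one exponential random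
variables: coordinate `0` is the primary channel gain `G = |g|²` and coordinates
`1, …, M` are the secondary channel gains `H₁, …, H_M`. -/
noncomputable def outageHSIC (M : ℕ) (R0 Rs P : ℝ) : ℝ :=
  haveI : IsProbabilityMeasure (expMeasure 1) := isProbabilityMeasure_expMeasure one_pos
  ((Measure.pi fun _ : Fin (M + 1) => expMeasure 1)
    {ω | (⨆ m : Fin M, rateHSIC P P ((2 ^ R0 - 1) / P) (ω m.succ) (ω 0)) < Rs}).toReal

section Aux

open Set

lemma expM_Iic (x : ℝ) :
    expMeasure 1 (Iic x) = ENNReal.ofReal (if 0 ≤ x then 1 - Real.exp (-x) else 0) := by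
  have h : expMeasure 1 (Iic x) = ∫⁻ y in Iic x, exponentialPDF 1 y := by
    rw [expMeasure, gammaMeasure, withDensity_apply _ measurableSet_Iic]
    rfl
  rw [h, lintegral_exponentialPDF_eq_antiDeriv one_pos x]
  simp

lemma expM_singleton (x : ℝ) : expMeasure 1 {x} = 0 := by
  rw [expMeasure, gammaMeasure, withDensity_apply _ (measurableSet_singleton x)]
  rw [Measure.restrict_eq_zero.mpr (measure_singleton x), lintegral_zero_measure]

lemma expM_Iio (x : ℝ) :
    expMeasure 1 (Iio x) = ENNReal.ofReal (if 0 ≤ x then 1 - Real.exp (-x) else 0) := by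
  rw [← expM_Iic]
  refine le_antisymm (measure_mono Iio_subset_Iic_self) ?_
  calc expMeasure 1 (Iic x) ≤ expMeasure 1 (Iio x ∪ {x}) := by
        refine measure_mono ?_
        intro y hy
        rcases lt_or_eq_of_le (mem_Iic.mp hy) with h | h
        · exact Or.inl h
        · exact Or.inr h
    _ ≤ expMeasure 1 (Iio x) + expMeasure 1 {x} := measure_union_le _ _
    _ = expMeasure 1 (Iio x) := by rw [expM_singleton, add_zero]

lemma expM_Ici {x : ℝ} (hx : 0 ≤ x) :
    expMeasure 1 (Ici x) = ENNReal.ofReal (Real.exp (-x)) := by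
  haveI : IsProbabilityMeasure (expMeasure 1) := isProbabilityMeasure_expMeasure one_pos
  have h : Ici x = (Iio x)ᶜ := by simp
  rw [h, prob_compl_eq_one_sub measurableSet_Iio, expM_Iio, if_pos hx]
  rw [← ENNReal.ofReal_one, ← ENNReal.ofReal_sub _ (by
    have := Real.exp_le_one_iff.mpr (neg_nonpos.mpr hx); linarith)]
  ring_nf

lemma expM_nonneg_ae : ∀ᵐ x ∂(expMeasure 1), 0 ≤ x := by
  rw [ae_iff]
  have h : {x : ℝ | ¬ 0 ≤ x} = Iio 0 := by ext x; simp
  rw [h, expM_Iio]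
  simp

/-- The effective outage threshold for a secondary channel gain. -/
noncomputable def Fthr (εs ε0 P g : ℝ) : ℝ :=
  if g < ε0 * (1 + εs) / P then εs * (P * g + 1) / P else εs / P

lemma rate_lt_iff_s3 {P ε0 εs h g : ℝ} (hP : 0 < P) (hε0 : 0 < ε0) (hεs : 0 < εs)
    (hg : 0 ≤ g) (hh : 0 ≤ h) :
    rateHSIC P P (ε0 / P) h g < Real.logb 2 (1 + εs) ↔ h < Fthr εs ε0 P g := by
  have hα0 : 0 < ε0 / P := div_pos hε0 hP
  set t := tau (ε0 / P) g with ht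
  have ht0 : 0 ≤ t := le_max_left _ _
  have hgα : g / (ε0 / P) = g * P / ε0 := by field_simp
  have hcond : g < ε0 * (1 + εs) / P ↔ t < εs := by
    rw [ht, tau, max_lt_iff, hgα, lt_div_iff₀ hP, sub_lt_iff_lt_add, div_lt_iff₀ hε0]
    constructor
    · intro hlt; exact ⟨hεs, by nlinarith⟩
    · rintro ⟨_, hlt⟩; nlinarith
  have h1εs : (0:ℝ) < 1 + εs := by linarith
  rw [rateHSIC, ← ht]
  split_ifs with hA
  · -- P * h ≤ t
    rw [logb_lt_logb_iff one_lt_two (by nlinarith) h1εs]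
    rw [Fthr]
    split_ifs with hc
    · have htεs : t < εs := hcond.mp hc
      constructor
      · intro _
        have h2 : P * h < εs := lt_of_le_of_lt hA htεs
        rw [lt_div_iff₀ hP]
        nlinarith [mul_nonneg (mul_nonneg hεs.le hP.le) hg]
      · intro _
        nlinarith
    · rw [lt_div_iff₀ hP]
      constructor <;> intro <;> nlinarith
  · -- t < P * h
    push_neg at hA
    have hPg1 : (0:ℝ) < P * g + 1 := by nlinarith
    rw [max_lt_iff, logb_lt_logb_iff one_lt_two (by positivity) h1εs,
      logb_lt_logb_iff one_lt_two (by nlinarith) h1εs]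
    rw [Fthr]
    split_ifs with hc
    · have htεs : t < εs := hcond.mp hc
      rw [add_lt_add_iff_left, add_lt_add_iff_left, div_lt_iff₀ hPg1, lt_div_iff₀ hP]
      constructor
      · intro ⟨h1, _⟩; nlinarith
      · intro h1
        refine ⟨by nlinarith, by nlinarith⟩
    · have htεs : εs ≤ t := not_lt.mp ((not_iff_not.mpr hcond).mp hc)
      rw [add_lt_add_iff_left, add_lt_add_iff_left, lt_div_iff₀ hP]
      constructor
      · intro ⟨_, h2⟩; nlinarith
      · intro h1; exfalso; nlinarith

lemma pi_measure_eq (M : ℕ) (F : ℝ → ℝ) (hF : Measurable F) :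
    (Measure.pi fun _ : Fin (M + 1) => expMeasure 1)
      {ω | ∀ m : Fin M, ω m.succ < F (ω 0)}
    = ∫⁻ g, (expMeasure 1 (Iio (F g))) ^ M ∂(expMeasure 1) := by
  haveI : IsProbabilityMeasure (expMeasure 1) := isProbabilityMeasure_expMeasure one_pos
  have hmp := measurePreserving_piFinSuccAbove (fun _ : Fin (M + 1) => expMeasure 1) 0
  set T : Set (ℝ × (Fin M → ℝ)) := {p | ∀ m, p.2 m < F p.1} with hTdef
  have hT : MeasurableSet T := by
    have h : T = ⋂ m : Fin M, {p : ℝ × (Fin M → ℝ) | p.2 m < F p.1} := by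
      ext p; simp [hTdef]
    rw [h]
    exact MeasurableSet.iInter fun m =>
      measurableSet_lt (measurable_snd.eval) (hF.comp measurable_fst)
  have hpre : {ω : Fin (M + 1) → ℝ | ∀ m : Fin M, ω m.succ < F (ω 0)}
      = (MeasurableEquiv.piFinSuccAbove (fun _ : Fin (M + 1) => ℝ) 0) ⁻¹' T := by
    ext ω
    simp [MeasurableEquiv.piFinSuccAbove, hTdef, Fin.succAbove_zero, Fin.tail]
  rw [hpre, hmp.measure_preimage hT.nullMeasurableSet, Measure.prod_apply hT]
  refine lintegral_congr fun g => ?_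
  have h : (Prod.mk g ⁻¹' T) = Set.pi Set.univ (fun _ : Fin M => Iio (F g)) := by
    ext hs; simp [hTdef]
  rw [h, Measure.pi_pi]
  simp [Finset.prod_const]

lemma fin_iSup_lt_iff {M : ℕ} (hM : 1 ≤ M) (f : Fin M → ℝ) (a : ℝ) :
    (⨆ m, f m) < a ↔ ∀ m, f m < a := by
  haveI : Nonempty (Fin M) := ⟨⟨0, hM⟩⟩
  obtain ⟨i, hi⟩ := Finite.exists_max f
  constructor
  · intro h m; exact lt_of_le_of_lt (le_ciSup (Set.finite_range f).bddAbove m) h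
  · intro h; exact lt_of_le_of_lt (ciSup_le fun j => hi j) (h i)

lemma pi_ae_nonneg (M : ℕ) :
    ∀ᵐ ω ∂(Measure.pi fun _ : Fin (M + 1) => expMeasure 1), ∀ i, 0 ≤ ω i := by
  haveI : IsProbabilityMeasure (expMeasure 1) := isProbabilityMeasure_expMeasure one_pos
  rw [ae_all_iff]
  intro i
  have h0 : expMeasure 1 (Iio 0) = 0 := by
    rw [expM_Iio]; simp
  have h : {ω : Fin (M + 1) → ℝ | ¬ 0 ≤ ω i}
      = Set.pi Set.univ (fun j => if j = i then Iio 0 else Set.univ) := by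
    ext ω
    simp only [Set.mem_setOf_eq, Set.mem_pi, Set.mem_univ, forall_true_left]
    constructor
    · intro h j
      by_cases hj : j = i
      · subst hj; simp [h, lt_of_not_ge h]
      · simp [hj]
    · intro h
      have := h i
      simp at this
      exact not_le.mpr this
  rw [ae_iff, h, Measure.pi_pi]
  refine Finset.prod_eq_zero (Finset.mem_univ i) ?_
  simp [h0]

lemma expM_Iio_le (x : ℝ) : expMeasure 1 (Set.Iio x) ≤ ENNReal.ofReal x := by
  rw [expM_Iio]
  split_ifs with h
  · exact ENNReal.ofReal_le_ofReal (by nlinarith [Real.add_one_le_exp (-x)])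
  · simp

end Aux

set_option maxHeartbeats 2000000 in
/-- at high SNR with `P0 = Ps = P`, the HSIC-PA outage probability equals
`εs^M / P^M` up to an error of order `P^{-(M+1)}`. -/
theorem hsic_pa_outage_high_snr_approx
    (M : ℕ) (hM : 1 ≤ M) (R0 Rs : ℝ) (hR0 : 0 < R0) (hRs : 0 < Rs)
    (εs : ℝ) (hεs : εs = 2 ^ Rs - 1) :
    ∃ C > (0 : ℝ), ∃ Pstar > (0 : ℝ), ∀ P ≥ Pstar,
      |outageHSIC M R0 Rs P - εs ^ M / P ^ M| ≤ C / P ^ (M + 1) := by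
  haveI : IsProbabilityMeasure (expMeasure 1) := isProbabilityMeasure_expMeasure one_pos
  set ε0 : ℝ := 2 ^ R0 - 1 with hε0def
  have h2 : (1:ℝ) < 2 := one_lt_two
  have hε0 : 0 < ε0 := by
    have h1 : (2:ℝ) ^ (0:ℝ) < 2 ^ R0 := (Real.rpow_lt_rpow_left_iff h2).mpr hR0
    rw [Real.rpow_zero] at h1
    simp only [hε0def]; linarith
  have hεs0 : 0 < εs := by
    have h1 : (2:ℝ) ^ (0:ℝ) < 2 ^ Rs := (Real.rpow_lt_rpow_left_iff h2).mpr hRs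
    rw [Real.rpow_zero] at h1
    rw [hεs]; linarith
  have hRs_eq : Rs = Real.logb 2 (1 + εs) := by
    rw [hεs, show (1:ℝ) + (2 ^ Rs - 1) = 2 ^ Rs by ring,
      Real.logb_rpow two_pos (by norm_num)]
  set c1 : ℝ := εs * (ε0 * (1 + εs) + 1) with hc1def
  have hc1 : 0 < c1 := by positivity
  refine ⟨c1 ^ M * (ε0 * (1 + εs)) + M * εs ^ (M + 1) + εs ^ M * (ε0 * (1 + εs)) + 1,
    by positivity, εs + ε0 * (1 + εs) + 1, by positivity, ?_⟩
  intro P hP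
  have hP0 : 0 < P := lt_of_lt_of_le (by positivity) hP
  set gs : ℝ := ε0 * (1 + εs) / P with hgsdef
  have hgs0 : 0 ≤ gs := by positivity
  have hgs1 : gs ≤ 1 := by
    rw [hgsdef, div_le_one hP0]; linarith
  set a : ℝ := εs / P with hadef
  have ha0 : 0 ≤ a := by positivity
  have hprod : (0:ℝ) ≤ ε0 * (1 + εs) := mul_nonneg hε0.le (by linarith)
  have ha1 : a ≤ 1 := by
    rw [hadef, div_le_one hP0]; linarith
  -- measurability of the threshold function
  have hFmeas : Measurable (Fthr εs ε0 P) := by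
    unfold Fthr
    exact Measurable.ite (measurableSet_lt measurable_id measurable_const)
      (by fun_prop) (by fun_prop)
  -- rewrite the outage set
  set μpi := Measure.pi fun _ : Fin (M + 1) => expMeasure 1 with hμpi
  set A := {ω : Fin (M + 1) → ℝ |
    (⨆ m : Fin M, rateHSIC P P ((2 ^ R0 - 1) / P) (ω m.succ) (ω 0)) < Rs} with hA
  have hout : outageHSIC M R0 Rs P = (μpi A).toReal := rfl
  have hae : A =ᵐ[μpi] {ω : Fin (M + 1) → ℝ | ∀ m : Fin M, ω m.succ < Fthr εs ε0 P (ω 0)} := by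
    have := pi_ae_nonneg M
    rw [← hμpi] at this
    rw [Filter.eventuallyEq_set]
    filter_upwards [this] with ω hω
    simp only [hA, Set.mem_setOf_eq]
    rw [hRs_eq, fin_iSup_lt_iff hM]
    exact forall_congr' fun m => rate_lt_iff_s3 hP0 hε0 hεs0 (hω 0) (hω m.succ)
  have hμA : μpi A = ∫⁻ g, (expMeasure 1 (Set.Iio (Fthr εs ε0 P g))) ^ M ∂(expMeasure 1) := by
    rw [measure_congr hae, hμpi, pi_measure_eq M _ hFmeas]
  -- upper bound
  have hub : μpi A ≤ ENNReal.ofReal ((c1 / P) ^ M * gs + (εs / P) ^ M) := by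
    rw [hμA]
    have hbd : ∀ᵐ g ∂(expMeasure 1),
        (expMeasure 1 (Set.Iio (Fthr εs ε0 P g))) ^ M ≤
        (Set.Iio gs).indicator (fun _ => ENNReal.ofReal (c1 / P) ^ M) g
          + ENNReal.ofReal (εs / P) ^ M := by
      filter_upwards [expM_nonneg_ae] with g hg
      by_cases hc : g < ε0 * (1 + εs) / P
      · have hF : Fthr εs ε0 P g = εs * (P * g + 1) / P := if_pos hc
        have h1 : Fthr εs ε0 P g ≤ c1 / P := by
          rw [hF, hc1def]
          have hlt : P * g < ε0 * (1 + εs) := by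
            rw [← lt_div_iff₀' hP0]; exact hc
          have hnum : εs * (P * g + 1) ≤ εs * (ε0 * (1 + εs) + 1) := by nlinarith
          gcongr
        have h2 : (expMeasure 1 (Set.Iio (Fthr εs ε0 P g))) ^ M
            ≤ ENNReal.ofReal (c1 / P) ^ M :=
          pow_le_pow_left₀ zero_le ((expM_Iio_le _).trans (ENNReal.ofReal_le_ofReal h1)) M
        have hmem : g ∈ Set.Iio gs := hc
        rw [Set.indicator_of_mem hmem]
        exact h2.trans le_self_add
      · have hF : Fthr εs ε0 P g = εs / P := if_neg hc
        have h2 : (expMeasure 1 (Set.Iio (Fthr εs ε0 P g))) ^ M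
            ≤ ENNReal.ofReal (εs / P) ^ M := by
          rw [hF]; exact pow_le_pow_left₀ zero_le (expM_Iio_le _) M
        exact h2.trans (self_le_add_left _ _)
    calc ∫⁻ g, (expMeasure 1 (Set.Iio (Fthr εs ε0 P g))) ^ M ∂(expMeasure 1)
        ≤ ∫⁻ g, ((Set.Iio gs).indicator (fun _ => ENNReal.ofReal (c1 / P) ^ M) g
            + ENNReal.ofReal (εs / P) ^ M) ∂(expMeasure 1) := lintegral_mono_ae hbd
      _ = ENNReal.ofReal (c1 / P) ^ M * expMeasure 1 (Set.Iio gs)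
            + ENNReal.ofReal (εs / P) ^ M := by
          rw [lintegral_add_right _ measurable_const, lintegral_indicator measurableSet_Iio,
            setLIntegral_const, lintegral_const, measure_univ, mul_one]
      _ ≤ ENNReal.ofReal (c1 / P) ^ M * ENNReal.ofReal gs + ENNReal.ofReal (εs / P) ^ M := by
          gcongr
          exact (expM_Iio_le gs).trans (ENNReal.ofReal_le_ofReal le_rfl)
      _ = ENNReal.ofReal ((c1 / P) ^ M * gs + (εs / P) ^ M) := by
          rw [← ENNReal.ofReal_pow (by positivity), ← ENNReal.ofReal_pow (by positivity),
            ← ENNReal.ofReal_mul (by positivity), ← ENNReal.ofReal_add (by positivity)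
            (by positivity)]
  -- lower bound
  have hlb : ENNReal.ofReal ((1 - Real.exp (-(εs / P))) ^ M * Real.exp (-gs)) ≤ μpi A := by
    rw [hμA]
    have hexp1 : (0:ℝ) ≤ 1 - Real.exp (-(εs / P)) := by
      have := Real.exp_le_one_iff.mpr (neg_nonpos.mpr (le_of_lt (by positivity : (0:ℝ) < εs / P)))
      linarith
    calc ENNReal.ofReal ((1 - Real.exp (-(εs / P))) ^ M * Real.exp (-gs))
        = ENNReal.ofReal (1 - Real.exp (-(εs / P))) ^ M * ENNReal.ofReal (Real.exp (-gs)) := by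
          rw [ENNReal.ofReal_mul (by positivity), ENNReal.ofReal_pow hexp1]
      _ = ∫⁻ g, (Set.Ici gs).indicator
            (fun _ => ENNReal.ofReal (1 - Real.exp (-(εs / P))) ^ M) g ∂(expMeasure 1) := by
          rw [lintegral_indicator measurableSet_Ici, setLIntegral_const, expM_Ici hgs0]
      _ ≤ ∫⁻ g, (expMeasure 1 (Set.Iio (Fthr εs ε0 P g))) ^ M ∂(expMeasure 1) := by
          refine lintegral_mono fun g => ?_
          by_cases hmem : g ∈ Set.Ici gs
          · rw [Set.indicator_of_mem hmem]
            have hc : ¬ g < ε0 * (1 + εs) / P := not_lt.mpr hmem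
            have hF : Fthr εs ε0 P g = εs / P := if_neg hc
            rw [hF, expM_Iio, if_pos (by positivity : (0:ℝ) ≤ εs / P)]
          · rw [Set.indicator_of_notMem hmem]
            exact zero_le
  -- convert to real bounds
  have hfin : μpi A ≠ ⊤ := measure_ne_top _ _
  have h_up : (μpi A).toReal ≤ (c1 / P) ^ M * gs + (εs / P) ^ M :=
    ENNReal.toReal_le_of_le_ofReal (by positivity) hub
  have h_lo : (1 - Real.exp (-(εs / P))) ^ M * Real.exp (-gs) ≤ (μpi A).toReal :=
    (ENNReal.ofReal_le_iff_le_toReal hfin).mp hlb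
  rw [hout]
  -- real estimates
  have hPpow : (0:ℝ) < P ^ (M + 1) := by positivity
  have hup2 : (c1 / P) ^ M * gs + (εs / P) ^ M
      = εs ^ M / P ^ M + c1 ^ M * (ε0 * (1 + εs)) / P ^ (M + 1) := by
    rw [hgsdef, div_pow, div_pow]
    field_simp
    ring
  have key1 : a - a ^ 2 ≤ 1 - Real.exp (-(εs / P)) := by
    rw [← hadef]
    have h1 : a + 1 ≤ Real.exp a := Real.add_one_le_exp a
    have h3 : 0 < Real.exp a := Real.exp_pos a
    have h5 : 0 < Real.exp (-a) := Real.exp_pos _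
    have h4 : Real.exp (-a) * Real.exp a = 1 := by
      rw [← Real.exp_add]; simp
    have h6 : Real.exp (-a) * (a + 1) ≤ 1 := by
      calc Real.exp (-a) * (a + 1) ≤ Real.exp (-a) * Real.exp a :=
            mul_le_mul_of_nonneg_left h1 h5.le
        _ = 1 := h4
    nlinarith [mul_nonneg (mul_nonneg ha0 ha0) ha0, sq_nonneg a,
      mul_nonneg ha0 h5.le]
  have key2 : 1 - gs ≤ Real.exp (-gs) := by
    have := Real.add_one_le_exp (-gs); linarith
  have key3 : 1 - (M:ℝ) * a ≤ (1 - a) ^ M := by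
    have := one_add_mul_le_pow (show (-2:ℝ) ≤ -a by linarith) M
    calc 1 - (M:ℝ) * a = 1 + (M:ℝ) * (-a) := by ring
      _ ≤ (1 + -a) ^ M := this
      _ = (1 - a) ^ M := by ring_nf
  have hexp1 : (0:ℝ) ≤ 1 - Real.exp (-(εs / P)) := by
    have := Real.exp_le_one_iff.mpr (neg_nonpos.mpr (le_of_lt (by positivity : (0:ℝ) < εs / P)))
    linarith
  have hlow_chain : a ^ M * (1 - ((M:ℝ) * a + gs))
      ≤ (1 - Real.exp (-(εs / P))) ^ M * Real.exp (-gs) := by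
    have s1 : a ^ M * (1 - ((M:ℝ) * a + gs)) ≤ a ^ M * ((1 - (M:ℝ) * a) * (1 - gs)) := by
      apply mul_le_mul_of_nonneg_left ?_ (pow_nonneg ha0 M)
      nlinarith [mul_nonneg (mul_nonneg (Nat.cast_nonneg M : (0:ℝ) ≤ M) ha0) hgs0]
    have s2 : a ^ M * ((1 - (M:ℝ) * a) * (1 - gs)) ≤ a ^ M * ((1 - a) ^ M * (1 - gs)) := by
      apply mul_le_mul_of_nonneg_left ?_ (pow_nonneg ha0 M)
      exact mul_le_mul_of_nonneg_right key3 (by linarith)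
    have s3 : a ^ M * ((1 - a) ^ M * (1 - gs)) = (a - a ^ 2) ^ M * (1 - gs) := by
      rw [show a - a ^ 2 = a * (1 - a) by ring, mul_pow]; ring
    have s4 : (a - a ^ 2) ^ M * (1 - gs) ≤ (1 - Real.exp (-(εs / P))) ^ M * (1 - gs) := by
      apply mul_le_mul_of_nonneg_right ?_ (by linarith)
      exact pow_le_pow_left₀ (by nlinarith) key1 M
    have s5 : (1 - Real.exp (-(εs / P))) ^ M * (1 - gs)
        ≤ (1 - Real.exp (-(εs / P))) ^ M * Real.exp (-gs) :=
      mul_le_mul_of_nonneg_left key2 (pow_nonneg hexp1 M)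
    linarith
  have hlow2 : a ^ M * (1 - ((M:ℝ) * a + gs))
      = εs ^ M / P ^ M - ((M:ℝ) * εs ^ (M + 1) + εs ^ M * (ε0 * (1 + εs))) / P ^ (M + 1) := by
    rw [hadef, hgsdef, div_pow]
    field_simp
    ring
  have hdiv : ∀ x y : ℝ, x ≤ y → x / P ^ (M + 1) ≤ y / P ^ (M + 1) := fun x y h => by
    rw [div_eq_mul_inv, div_eq_mul_inv]
    exact mul_le_mul_of_nonneg_right h (inv_nonneg.mpr hPpow.le)
  have hc1M : (0:ℝ) ≤ c1 ^ M * (ε0 * (1 + εs)) := mul_nonneg (pow_pos hc1 M).le hprod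
  have hM1 : (0:ℝ) ≤ (M:ℝ) * εs ^ (M + 1) :=
    mul_nonneg (Nat.cast_nonneg M) (pow_nonneg hεs0.le (M + 1))
  have hM2 : (0:ℝ) ≤ εs ^ M * (ε0 * (1 + εs)) := mul_nonneg (pow_nonneg hεs0.le M) hprod
  rw [abs_sub_le_iff]
  constructor
  · have h6 : (μpi A).toReal ≤ εs ^ M / P ^ M + c1 ^ M * (ε0 * (1 + εs)) / P ^ (M + 1) := by
      rw [← hup2]; exact h_up
    have h7 := hdiv _ _ (show c1 ^ M * (ε0 * (1 + εs))
        ≤ c1 ^ M * (ε0 * (1 + εs)) + (M:ℝ) * εs ^ (M + 1) + εs ^ M * (ε0 * (1 + εs)) + 1 by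
      linarith)
    linarith
  · have h8 := hlow_chain.trans h_lo
    rw [hlow2] at h8
    have h9 := hdiv _ _ (show (M:ℝ) * εs ^ (M + 1) + εs ^ M * (ε0 * (1 + εs))
        ≤ c1 ^ M * (ε0 * (1 + εs)) + (M:ℝ) * εs ^ (M + 1) + εs ^ M * (ε0 * (1 + εs)) + 1 by
      linarith)
    linarith
end

section
/- The diversity gain achieved by the HSIC-PA scheme equals M: Pout(P) > 0 for every P > 0, and lim_{P→∞} log Pout(P) / log P = −M. -/
open MeasureTheory ProbabilityTheory Real Filter

namespace HSICAux

open Set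

noncomputable def μe : Measure ℝ := expMeasure 1

instance : IsProbabilityMeasure μe := isProbabilityMeasure_expMeasure one_pos

lemma μe_apply {s : Set ℝ} (hs : MeasurableSet s) :
    μe s = ∫⁻ x in s, exponentialPDF 1 x := by
  rw [μe, expMeasure, gammaMeasure, withDensity_apply _ hs]
  rfl

lemma μe_Iic {x : ℝ} (hx : 0 ≤ x) : μe (Iic x) = ENNReal.ofReal (1 - Real.exp (-x)) := by
  rw [μe_apply measurableSet_Iic, lintegral_exponentialPDF_eq_antiDeriv one_pos, if_pos hx,
    one_mul]

lemma μe_singleton (x : ℝ) : μe {x} = 0 := by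
  have h : μe ≪ volume := by
    rw [μe, expMeasure, gammaMeasure]; exact withDensity_absolutelyContinuous _ _
  exact h (measure_singleton x)

lemma μe_Iio {x : ℝ} (hx : 0 ≤ x) : μe (Iio x) = ENNReal.ofReal (1 - Real.exp (-x)) := by
  have h1 : μe (Iio x) ≤ μe (Iic x) := measure_mono Iio_subset_Iic_self
  have hsub : Iic x ⊆ Iio x ∪ {x} := by
    intro y hy
    have hy' : y ≤ x := hy
    rcases lt_or_eq_of_le hy' with h | h
    · exact Or.inl h
    · exact Or.inr h
  have h2 : μe (Iic x) ≤ μe (Iio x) + μe {x} :=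
    (measure_mono hsub).trans (measure_union_le _ _)
  rw [μe_singleton, add_zero] at h2
  rw [← μe_Iic hx]
  exact le_antisymm h1 h2

lemma μe_Iio_zero : μe (Iio 0) = 0 := by
  rw [μe_apply measurableSet_Iio]
  exact lintegral_exponentialPDF_of_nonpos le_rfl

lemma μe_Ico {x : ℝ} (hx : 0 ≤ x) : μe (Ico 0 x) = ENNReal.ofReal (1 - Real.exp (-x)) := by
  have h1 : μe (Iio x) ≤ μe (Iio 0) + μe (Ico 0 x) := by
    refine (measure_mono ?_).trans (measure_union_le _ _)
    intro y hy
    rcases lt_or_ge y 0 with h | h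
    · exact Or.inl h
    · exact Or.inr ⟨h, hy⟩
  rw [μe_Iio_zero, zero_add] at h1
  have h2 : μe (Ico 0 x) ≤ μe (Iio x) := measure_mono fun y hy => hy.2
  rw [← μe_Iio hx]
  exact le_antisymm h2 h1

lemma μe_Ici {x : ℝ} (hx : 0 ≤ x) : μe (Ici x) = ENNReal.ofReal (Real.exp (-x)) := by
  have h := measure_compl (measurableSet_Iio (a := x)) (measure_ne_top μe _)
  rw [compl_Iio] at h
  rw [h, measure_univ, μe_Iio hx, ← ENNReal.ofReal_one]
  rw [← ENNReal.ofReal_sub _ (by nlinarith [Real.exp_le_one_iff.mpr (by linarith : -x ≤ 0)] :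
    (0:ℝ) ≤ 1 - Real.exp (-x))]
  norm_num

lemma μe_Iio_le {x : ℝ} (hx : 0 ≤ x) : μe (Iio x) ≤ ENNReal.ofReal x := by
  rw [μe_Iio hx]
  exact ENNReal.ofReal_le_ofReal (by nlinarith [Real.add_one_le_exp (-x)])

lemma μe_Ico_le {x : ℝ} (hx : 0 ≤ x) : μe (Ico 0 x) ≤ ENNReal.ofReal x := by
  rw [μe_Ico hx]
  exact ENNReal.ofReal_le_ofReal (by nlinarith [Real.add_one_le_exp (-x)])

lemma measure_box (M : ℕ) (A B : Set ℝ) :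
    (Measure.pi fun _ : Fin (M + 1) => expMeasure 1)
      {ω : Fin (M + 1) → ℝ | ω 0 ∈ A ∧ ∀ m : Fin M, ω m.succ ∈ B} = μe A * μe B ^ M := by
  haveI : IsProbabilityMeasure (expMeasure 1) := isProbabilityMeasure_expMeasure one_pos
  have hset : {ω : Fin (M + 1) → ℝ | ω 0 ∈ A ∧ ∀ m : Fin M, ω m.succ ∈ B}
      = Set.univ.pi (Fin.cons A fun _ => B) := by
    ext ω
    simp only [Set.mem_setOf_eq, Set.mem_univ_pi]
    rw [Fin.forall_fin_succ]
    simp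
  rw [hset, Measure.pi_pi, Fin.prod_univ_succ]
  simp [μe, Finset.prod_const]

lemma iSup_lt_iff' {M : ℕ} (hM : 1 ≤ M) (f : Fin M → ℝ) (a : ℝ) :
    (⨆ m, f m) < a ↔ ∀ m, f m < a := by
  haveI : Nonempty (Fin M) := Fin.pos_iff_nonempty.mp hM
  constructor
  · intro h m
    exact lt_of_le_of_lt (le_ciSup (Set.Finite.bddAbove (Set.finite_range f)) m) h
  · intro h
    obtain ⟨i, hi⟩ := Finite.exists_max f
    exact lt_of_le_of_lt (ciSup_le hi) (h i)

lemma tau_ge {P e0 es g : ℝ} (hP : 0 < P) (he0 : 0 < e0)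
    (hg : e0 * (1 + es) / P ≤ g) : es ≤ tau (e0 / P) g := by
  have h1 : e0 * (1 + es) ≤ g * P := (div_le_iff₀ hP).mp hg
  have h2 : (1 + es) ≤ g / (e0 / P) := by
    rw [div_div_eq_mul_div, le_div_iff₀ he0]
    nlinarith
  have : es ≤ g / (e0 / P) - 1 := by linarith
  exact this.trans (le_max_right _ _)

lemma rate_lt_of_mem {P e0 es g h Rs : ℝ} (hP : 0 < P) (he0 : 0 < e0)
    (h2 : (2 : ℝ) ^ Rs = 1 + es)
    (hg : e0 * (1 + es) / P ≤ g) (hh0 : 0 ≤ h) (hh : h < es / P) :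
    rateHSIC P P (e0 / P) h g < Rs := by
  have hPh : P * h < es := by
    have := (lt_div_iff₀ hP).mp hh
    nlinarith
  have hPh0 : 0 ≤ P * h := mul_nonneg hP.le hh0
  have htau := tau_ge (es := es) hP he0 hg
  rw [rateHSIC, if_pos (hPh.le.trans htau)]
  rw [Real.logb_lt_iff_lt_rpow one_lt_two (by linarith : (0 : ℝ) < 1 + P * h), h2]
  linarith

lemma mem_of_rate_lt_high {P e0 es g h Rs : ℝ} (hP : 0 < P) (he0 : 0 < e0) (hes : 0 < es)
    (h2 : (2 : ℝ) ^ Rs = 1 + es)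
    (hg : e0 * (1 + es) / P ≤ g) (hr : rateHSIC P P (e0 / P) h g < Rs) : h < es / P := by
  have htau := tau_ge (es := es) hP he0 hg
  rw [rateHSIC] at hr
  split_ifs at hr with hc
  · by_contra hcon
    push_neg at hcon
    have hPh : es ≤ P * h := by
      have := (div_le_iff₀ hP).mp hcon
      nlinarith
    have : Rs ≤ Real.logb 2 (1 + P * h) := by
      rw [Real.le_logb_iff_rpow_le one_lt_two (by linarith : (0 : ℝ) < 1 + P * h), h2]
      linarith
    linarith
  · exfalso
    have h3 : Real.logb 2 (1 + tau (e0 / P) g) < Rs := lt_of_le_of_lt (le_max_right _ _) hr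
    have : Rs ≤ Real.logb 2 (1 + tau (e0 / P) g) := by
      rw [Real.le_logb_iff_rpow_le one_lt_two (by linarith : (0 : ℝ) < 1 + tau (e0 / P) g), h2]
      linarith
    linarith

lemma mem_of_rate_lt_low {P e0 es g h Rs : ℝ} (hP : 0 < P) (he0 : 0 < e0) (hes : 0 < es)
    (h2 : (2 : ℝ) ^ Rs = 1 + es)
    (hg0 : 0 ≤ g) (hg : g < e0 * (1 + es) / P) (hr : rateHSIC P P (e0 / P) h g < Rs) :
    h < es * (e0 * (1 + es) + 1) / P := by
  have hcpos : 0 < e0 * (1 + es) := by nlinarith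
  have hgP : g * P < e0 * (1 + es) := (lt_div_iff₀ hP).mp hg
  have htau : tau (e0 / P) g < es := by
    refine max_lt hes ?_
    rw [div_div_eq_mul_div]
    have : g * P / e0 < 1 + es := (div_lt_iff₀ he0).mpr (by nlinarith)
    linarith
  have htau0 : (0 : ℝ) ≤ tau (e0 / P) g := le_max_left _ _
  rw [rateHSIC] at hr
  rw [lt_div_iff₀ hP]
  split_ifs at hr with hcase
  · nlinarith
  · push_neg at hcase
    have hPg1 : (0 : ℝ) < P * g + 1 := by nlinarith
    have h3 : Real.logb 2 (1 + P * h / (P * g + 1)) < Rs := lt_of_le_of_lt (le_max_left _ _) hr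
    have hx : 0 < P * h / (P * g + 1) := div_pos (lt_of_le_of_lt htau0 hcase) hPg1
    rw [Real.logb_lt_iff_lt_rpow one_lt_two (by linarith), h2] at h3
    have h4 : P * h < es * (P * g + 1) := by
      have := (div_lt_iff₀ hPg1).mp (by linarith : P * h / (P * g + 1) < es)
      nlinarith
    nlinarith

lemma outage_bounds (M : ℕ) (hM : 1 ≤ M) {R0 Rs e0 es c : ℝ} (hR0 : 0 < R0) (hRs : 0 < Rs)
    (he0 : e0 = 2 ^ R0 - 1) (hes : es = 2 ^ Rs - 1) (hc : c = e0 * (1 + es))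
    {P : ℝ} (hP : 0 < P) :
    Real.exp (-(c / P)) * (1 - Real.exp (-(es / P))) ^ M ≤ outageHSIC M R0 Rs P ∧
      outageHSIC M R0 Rs P ≤ (es / P) ^ M + (c / P) * (es * (c + 1) / P) ^ M := by
  haveI : IsProbabilityMeasure (expMeasure 1) := isProbabilityMeasure_expMeasure one_pos
  have he0p : 0 < e0 := by
    have := Real.rpow_lt_rpow_of_exponent_lt one_lt_two hR0
    rw [Real.rpow_zero] at this
    rw [he0]; linarith
  have hesp : 0 < es := by
    have := Real.rpow_lt_rpow_of_exponent_lt one_lt_two hRs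
    rw [Real.rpow_zero] at this
    rw [hes]; linarith
  have h2s : (2 : ℝ) ^ Rs = 1 + es := by rw [hes]; ring
  have hcp : 0 < c := by rw [hc]; nlinarith
  set ν := Measure.pi fun _ : Fin (M + 1) => expMeasure 1 with hν
  set E := {ω : Fin (M + 1) → ℝ |
    (⨆ m : Fin M, rateHSIC P P (e0 / P) (ω m.succ) (ω 0)) < Rs} with hE
  have hout : outageHSIC M R0 Rs P = (ν E).toReal := by
    rw [hE, hν]
    unfold outageHSIC
    rw [← he0]
  have hEmem : ∀ ω : Fin (M + 1) → ℝ,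
      ω ∈ E ↔ ∀ m : Fin M, rateHSIC P P (e0 / P) (ω m.succ) (ω 0) < Rs := fun ω =>
    iSup_lt_iff' hM _ _
  have hq1 : (0:ℝ) ≤ es / P := div_nonneg hesp.le hP.le
  have hq2 : (0:ℝ) ≤ c / P := div_nonneg hcp.le hP.le
  have hq3 : (0:ℝ) ≤ es * (c + 1) / P := div_nonneg (by nlinarith) hP.le
  have hexple : (0:ℝ) ≤ 1 - Real.exp (-(es / P)) := by
    nlinarith [Real.exp_le_one_iff.mpr (by linarith : -(es / P) ≤ 0)]
  constructor
  · -- lower bound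
    have hsub1 : {ω : Fin (M + 1) → ℝ | ω 0 ∈ Ici (c / P) ∧
        ∀ m : Fin M, ω m.succ ∈ Ico 0 (es / P)} ⊆ E := by
      rintro ω ⟨hg, hh⟩
      refine (hEmem ω).mpr fun m => ?_
      have hg' : e0 * (1 + es) / P ≤ ω 0 := by rw [← hc]; exact hg
      exact rate_lt_of_mem hP he0p h2s hg' (hh m).1 (hh m).2
    have hlow : ENNReal.ofReal (Real.exp (-(c / P)) * (1 - Real.exp (-(es / P))) ^ M) ≤ ν E := by
      rw [ENNReal.ofReal_mul (Real.exp_nonneg _), ENNReal.ofReal_pow hexple,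
        ← μe_Ici hq2, ← μe_Ico hq1, ← measure_box]
      exact measure_mono hsub1
    have h1 := ENNReal.toReal_mono (measure_ne_top ν E) hlow
    rw [ENNReal.toReal_ofReal (mul_nonneg (Real.exp_nonneg _) (pow_nonneg hexple _))] at h1
    rw [hout]
    exact h1
  · -- upper bound
    have hsub2 : E ⊆ ({ω : Fin (M + 1) → ℝ | ω 0 ∈ Ici (c / P) ∧
          ∀ m : Fin M, ω m.succ ∈ Iio (es / P)} ∪
        {ω : Fin (M + 1) → ℝ | ω 0 ∈ Ico 0 (c / P) ∧
          ∀ m : Fin M, ω m.succ ∈ Iio (es * (c + 1) / P)}) ∪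
        {ω : Fin (M + 1) → ℝ | ω 0 ∈ Iio 0 ∧ ∀ m : Fin M, ω m.succ ∈ univ} := by
      intro ω hω
      have hall := (hEmem ω).mp hω
      rcases le_or_gt (c / P) (ω 0) with hg | hg
      · refine Or.inl (Or.inl ⟨hg, fun m => ?_⟩)
        have hg' : e0 * (1 + es) / P ≤ ω 0 := by rw [← hc]; exact hg
        exact mem_of_rate_lt_high hP he0p hesp h2s hg' (hall m)
      rcases le_or_gt 0 (ω 0) with hg0 | hg0
      · refine Or.inl (Or.inr ⟨⟨hg0, hg⟩, fun m => ?_⟩)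
        have hg' : ω 0 < e0 * (1 + es) / P := by rw [← hc]; exact hg
        have := mem_of_rate_lt_low hP he0p hesp h2s hg0 hg' (hall m)
        rw [← hc] at this
        exact this
      · exact Or.inr ⟨hg0, fun m => mem_univ _⟩
    have hB1 : μe (Ici (c / P)) * μe (Iio (es / P)) ^ M ≤ ENNReal.ofReal ((es / P) ^ M) := by
      calc μe (Ici (c / P)) * μe (Iio (es / P)) ^ M
          ≤ 1 * ENNReal.ofReal (es / P) ^ M :=
            mul_le_mul' prob_le_one (pow_le_pow_left' (μe_Iio_le hq1) M)
        _ = ENNReal.ofReal ((es / P) ^ M) := by rw [one_mul, ← ENNReal.ofReal_pow hq1]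
    have hB2 : μe (Ico 0 (c / P)) * μe (Iio (es * (c + 1) / P)) ^ M
        ≤ ENNReal.ofReal (c / P * (es * (c + 1) / P) ^ M) := by
      rw [ENNReal.ofReal_mul hq2, ENNReal.ofReal_pow hq3]
      exact mul_le_mul' (μe_Ico_le hq2) (pow_le_pow_left' (μe_Iio_le hq3) M)
    have hup : ν E ≤ ENNReal.ofReal ((es / P) ^ M + c / P * (es * (c + 1) / P) ^ M) := by
      calc ν E ≤ (ν {ω : Fin (M + 1) → ℝ | ω 0 ∈ Ici (c / P) ∧
            ∀ m : Fin M, ω m.succ ∈ Iio (es / P)} +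
          ν {ω : Fin (M + 1) → ℝ | ω 0 ∈ Ico 0 (c / P) ∧
            ∀ m : Fin M, ω m.succ ∈ Iio (es * (c + 1) / P)}) +
          ν {ω : Fin (M + 1) → ℝ | ω 0 ∈ Iio 0 ∧ ∀ m : Fin M, ω m.succ ∈ univ} :=
            (measure_mono hsub2).trans
              ((measure_union_le _ _).trans (add_le_add_left (measure_union_le _ _) _))
        _ ≤ (ENNReal.ofReal ((es / P) ^ M) +
              ENNReal.ofReal (c / P * (es * (c + 1) / P) ^ M)) + 0 := by
            rw [hν, measure_box, measure_box, measure_box, μe_Iio_zero, zero_mul]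
            exact add_le_add (add_le_add hB1 hB2) le_rfl
        _ = ENNReal.ofReal ((es / P) ^ M + c / P * (es * (c + 1) / P) ^ M) := by
            rw [add_zero, ← ENNReal.ofReal_add (pow_nonneg hq1 _)
              (mul_nonneg hq2 (pow_nonneg hq3 _))]
    have h1 := ENNReal.toReal_mono ENNReal.ofReal_ne_top hup
    rw [ENNReal.toReal_ofReal (by positivity)] at h1
    rw [hout]
    exact h1

end HSICAux

open HSICAux in
/-- Remark 2: the diversity gain of the HSIC-PA scheme is `M`:
the outage probability is positive for every `P > 0` and
`log Pout(P) / log P → −M` as `P → ∞`. -/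
theorem hsic_pa_diversity_gain
    (M : ℕ) (hM : 1 ≤ M) (R0 Rs : ℝ) (hR0 : 0 < R0) (hRs : 0 < Rs) :
    (∀ P > (0 : ℝ), 0 < outageHSIC M R0 Rs P) ∧
    Tendsto (fun P : ℝ => Real.log (outageHSIC M R0 Rs P) / Real.log P)
      atTop (nhds (-(M : ℝ))) := by
  set e0 : ℝ := 2 ^ R0 - 1 with he0
  set es : ℝ := 2 ^ Rs - 1 with hes
  set c : ℝ := e0 * (1 + es) with hc
  have he0p : 0 < e0 := by
    have := Real.rpow_lt_rpow_of_exponent_lt one_lt_two hR0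
    rw [Real.rpow_zero] at this
    rw [he0]; linarith
  have hesp : 0 < es := by
    have := Real.rpow_lt_rpow_of_exponent_lt one_lt_two hRs
    rw [Real.rpow_zero] at this
    rw [hes]; linarith
  have hcp : 0 < c := by rw [hc]; nlinarith
  have hpos : ∀ P > (0 : ℝ), 0 < outageHSIC M R0 Rs P := by
    intro P hP
    have hb := (outage_bounds M hM hR0 hRs he0 hes hc hP).1
    have hlt1 : Real.exp (-(es / P)) < 1 :=
      Real.exp_lt_one_iff.mpr (by simpa using neg_neg_iff_pos.mpr (div_pos hesp hP))
    have : (0:ℝ) < Real.exp (-(c / P)) * (1 - Real.exp (-(es / P))) ^ M :=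
      mul_pos (Real.exp_pos _) (pow_pos (by linarith) _)
    linarith
  refine ⟨hpos, ?_⟩
  set A : ℝ := Real.exp (-c) * (es * Real.exp (-es)) ^ M with hA
  set B : ℝ := es ^ M + c * (es * (c + 1)) ^ M with hB
  have hAp : 0 < A := mul_pos (Real.exp_pos _)
    (pow_pos (mul_pos hesp (Real.exp_pos _)) _)
  have hBp : 0 < B := by
    have : (0:ℝ) < es ^ M := pow_pos hesp _
    have : (0:ℝ) < (es * (c + 1)) ^ M := pow_pos (by nlinarith) _
    rw [hB]; positivity
  have hg : Tendsto (fun P : ℝ => Real.log A / Real.log P - (M : ℝ)) atTop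
      (nhds (-(M : ℝ))) := by
    have := (Filter.Tendsto.const_div_atTop Real.tendsto_log_atTop (Real.log A)).sub_const
      (M : ℝ)
    simpa using this
  have hh : Tendsto (fun P : ℝ => Real.log B / Real.log P - (M : ℝ)) atTop
      (nhds (-(M : ℝ))) := by
    have := (Filter.Tendsto.const_div_atTop Real.tendsto_log_atTop (Real.log B)).sub_const
      (M : ℝ)
    simpa using this
  refine tendsto_of_tendsto_of_tendsto_of_le_of_le' hg hh ?_ ?_
  · -- lower bound eventually
    filter_upwards [eventually_ge_atTop (2:ℝ)] with P hP2
    have hP : (0:ℝ) < P := by linarith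
    have hP1 : (1:ℝ) ≤ P := by linarith
    have hlogP : 0 < Real.log P := Real.log_pos (by linarith)
    obtain ⟨hlo, _⟩ := outage_bounds M hM hR0 hRs he0 hes hc hP
    -- A / P ^ M ≤ outage
    have t1 : Real.exp (-c) ≤ Real.exp (-(c / P)) := by
      apply Real.exp_le_exp.mpr
      have : c / P ≤ c := div_le_self hcp.le hP1
      linarith
    have hmul : Real.exp (es / P) * Real.exp (-(es / P)) = 1 := by
      rw [← Real.exp_add]; norm_num
    have k1 : es / P * Real.exp (-(es / P)) ≤ 1 - Real.exp (-(es / P)) := by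
      nlinarith [Real.add_one_le_exp (es / P), Real.exp_pos (-(es / P))]
    have k2 : Real.exp (-es) ≤ Real.exp (-(es / P)) := by
      apply Real.exp_le_exp.mpr
      have : es / P ≤ es := div_le_self hesp.le hP1
      linarith
    have t2 : es * Real.exp (-es) / P ≤ 1 - Real.exp (-(es / P)) := by
      have hrw : es * Real.exp (-es) / P = es / P * Real.exp (-es) := by ring
      have : es / P * Real.exp (-es) ≤ es / P * Real.exp (-(es / P)) :=
        mul_le_mul_of_nonneg_left k2 (div_nonneg hesp.le hP.le)
      rw [hrw]; linarith
    have t3 : (es * Real.exp (-es) / P) ^ M ≤ (1 - Real.exp (-(es / P))) ^ M :=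
      pow_le_pow_left₀ (div_nonneg (mul_nonneg hesp.le (Real.exp_nonneg _)) hP.le) t2 M
    have t4 : Real.exp (-c) * (es * Real.exp (-es) / P) ^ M ≤
        Real.exp (-(c / P)) * (1 - Real.exp (-(es / P))) ^ M :=
      mul_le_mul t1 t3 (pow_nonneg (div_nonneg
        (mul_nonneg hesp.le (Real.exp_nonneg _)) hP.le) _) (Real.exp_pos _).le
    have t5 : A / P ^ M = Real.exp (-c) * (es * Real.exp (-es) / P) ^ M := by
      rw [hA, div_pow]
      ring
    have lowAP : A / P ^ M ≤ outageHSIC M R0 Rs P := by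
      rw [t5]; exact t4.trans hlo
    -- conclude
    have hPM : (0:ℝ) < P ^ M := pow_pos hP M
    have houtp : 0 < outageHSIC M R0 Rs P := lt_of_lt_of_le (div_pos hAp hPM) lowAP
    have hlogle : Real.log A - (M : ℝ) * Real.log P ≤ Real.log (outageHSIC M R0 Rs P) := by
      have := Real.log_le_log (div_pos hAp hPM) lowAP
      rwa [Real.log_div hAp.ne' (pow_ne_zero M hP.ne'), Real.log_pow] at this
    have : (Real.log A - (M : ℝ) * Real.log P) / Real.log P ≤
        Real.log (outageHSIC M R0 Rs P) / Real.log P :=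
      div_le_div_of_nonneg_right hlogle hlogP.le
    rwa [sub_div, mul_div_assoc, div_self hlogP.ne', mul_one] at this
  · -- upper bound eventually
    filter_upwards [eventually_ge_atTop (2:ℝ)] with P hP2
    have hP : (0:ℝ) < P := by linarith
    have hP1 : (1:ℝ) ≤ P := by linarith
    have hlogP : 0 < Real.log P := Real.log_pos (by linarith)
    obtain ⟨hlo, hhi⟩ := outage_bounds M hM hR0 hRs he0 hes hc hP
    have hPM : (0:ℝ) < P ^ M := pow_pos hP M
    have u1 : (es / P) ^ M = es ^ M / P ^ M := div_pow es P M
    have u2 : c / P * (es * (c + 1) / P) ^ M ≤ c * (es * (c + 1)) ^ M / P ^ M := by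
      rw [div_pow]
      have hle : c / P ≤ c := div_le_self hcp.le hP1
      have hnn : (0:ℝ) ≤ (es * (c + 1)) ^ M / P ^ M :=
        div_nonneg (pow_nonneg (by nlinarith) _) hPM.le
      calc c / P * ((es * (c + 1)) ^ M / P ^ M)
          ≤ c * ((es * (c + 1)) ^ M / P ^ M) := mul_le_mul_of_nonneg_right hle hnn
        _ = c * (es * (c + 1)) ^ M / P ^ M := by ring
    have highBP : outageHSIC M R0 Rs P ≤ B / P ^ M := by
      have hBeq : B / P ^ M = es ^ M / P ^ M + c * (es * (c + 1)) ^ M / P ^ M := by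
        rw [hB]; ring
      rw [hBeq]
      calc outageHSIC M R0 Rs P ≤ (es / P) ^ M + c / P * (es * (c + 1) / P) ^ M := hhi
        _ ≤ es ^ M / P ^ M + c * (es * (c + 1)) ^ M / P ^ M := by rw [u1] at *; linarith
    have houtp : 0 < outageHSIC M R0 Rs P := hpos P hP
    have hlogle : Real.log (outageHSIC M R0 Rs P) ≤ Real.log B - (M : ℝ) * Real.log P := by
      have := Real.log_le_log houtp highBP
      rwa [Real.log_div hBp.ne' (pow_ne_zero M hP.ne'), Real.log_pow] at this
    have : Real.log (outageHSIC M R0 Rs P) / Real.log P ≤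
        (Real.log B - (M : ℝ) * Real.log P) / Real.log P :=
      div_le_div_of_nonneg_right hlogle hlogP.le
    rwa [sub_div, mul_div_assoc, div_self hlogP.ne', mul_one] at this
end
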